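/- arXiv:1104.4870 — 5 statements merged into one kernel-verified Lean document; each statement's English description precedes it below -/
import Mathlib

section
/- For a composition ν of n, there exists a bijection Φ from the set of words of weight ν to itself such that inv(Φ(w)) = maj(w) for every word w of weight ν. -/
open Finset

/-- The canonical word of weight `ν`: `ν.get 0` letters `1`, then `ν.get 1` letters `2`, etc. -/
def canonicalWord (ν : List ℕ) : List ℕ :=
  (List.range ν.length).flatMap fun i => List.replicate (ν.getD i 0) (i + 1)

/-- The (finite) set of all words of weight `ν`, i.e. all rearrangements of the
canonical word of weight `ν`. -/
def WordSet (ν : List ℕ) : Finset (List ℕ) :=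
  (canonicalWord ν).permutations.toFinset

/-- The number of inversions of a word: pairs of positions `i < j` with `w i > w j`. -/
def invL : List ℕ → ℕ
  | [] => 0
  | a :: l => (l.countP fun b => decide (b < a)) + invL l

/-- The major index of a word: the sum of the (1-based) positions `i` with `w_i > w_{i+1}`. -/
def majL (w : List ℕ) : ℕ :=
  ∑ i ∈ Finset.range w.length,
    if w.getD (i + 1) 0 < w.getD i 0 ∧ i + 1 < w.length then i + 1 else 0


/-! ### cross and invL append -/

def crossL (u v : List ℕ) : ℕ := (u.map (fun a => v.countP fun b => decide (b < a))).sum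

lemma crossL_nil (v : List ℕ) : crossL [] v = 0 := rfl

lemma crossL_cons (a : ℕ) (u v : List ℕ) :
    crossL (a :: u) v = (v.countP fun b => decide (b < a)) + crossL u v := by
  simp [crossL]

lemma crossL_append_right (u v w : List ℕ) :
    crossL u (v ++ w) = crossL u v + crossL u w := by
  induction u with
  | nil => rfl
  | cons a u ih => simp [crossL_cons, ih, List.countP_append]; ring

lemma crossL_perm {u u' v v' : List ℕ} (hu : u.Perm u') (hv : v.Perm v') :
    crossL u v = crossL u' v' := by
  have h1 : crossL u v = crossL u' v := (hu.map _).sum_eq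
  have h2 : crossL u' v = crossL u' v' := by
    unfold crossL
    congr 1
    apply List.map_congr_left
    intro a _
    exact hv.countP_eq _
  rw [h1, h2]

lemma crossL_singleton (u : List ℕ) (x : ℕ) :
    crossL u [x] = u.countP fun z => decide (x < z) := by
  induction u with
  | nil => rfl
  | cons a u ih =>
    rw [crossL_cons, ih, List.countP_cons]
    simp [List.countP_cons, eq_comm]
    by_cases h : x < a <;> simp [h] <;> omega

lemma invL_append (u v : List ℕ) :
    invL (u ++ v) = invL u + invL v + crossL u v := by
  induction u with
  | nil => simp [invL, crossL_nil]
  | cons a u ih =>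
    show (List.countP _ (u ++ v)) + invL (u ++ v) = _
    rw [ih, List.countP_append, crossL_cons, show invL (a :: u) = (u.countP fun b => decide (b < a)) + invL u from rfl]
    ring

/-! ### gamma -/

def gammaGo (p : ℕ → Bool) : List ℕ → List ℕ → List ℕ
  | acc, [] => acc.reverse
  | acc, x :: xs => if p x then (x :: acc.reverse) ++ gammaGo p [] xs else gammaGo p (x :: acc) xs

lemma gammaGo_perm (p : ℕ → Bool) : ∀ (l acc : List ℕ), (gammaGo p acc l).Perm (acc.reverse ++ l) := by
  intro l
  induction l with
  | nil => intro acc; simp [gammaGo]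
  | cons x xs ih =>
    intro acc
    by_cases h : p x
    · simp only [gammaGo, h, if_true]
      have h1 : ((x :: acc.reverse) ++ gammaGo p [] xs).Perm ((x :: acc.reverse) ++ xs) :=
        ((ih []).trans (by simp)).append_left _
      refine h1.trans ?_
      have : (x :: acc.reverse).Perm (acc.reverse ++ [x]) := by
        simpa using (List.perm_append_comm (l₁ := [x]) (l₂ := acc.reverse))
      simpa using this.append_right xs
    · simp only [gammaGo, h, if_false]
      refine (ih (x :: acc)).trans ?_
      simp

lemma getLastD_cons_ne (x : ℕ) {xs : List ℕ} (h : xs ≠ []) :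
    (x :: xs).getLastD 0 = xs.getLastD 0 := by
  rw [List.getLastD_cons, List.getLastD_eq_getLast?, List.getLastD_eq_getLast?,
    List.getLast?_eq_getLast h]
  simp

lemma invL_cons (a : ℕ) (l : List ℕ) :
    invL (a :: l) = (l.countP fun b => decide (b < a)) + invL l := rfl

lemma crossL_cons_right (u : List ℕ) (x : ℕ) (v : List ℕ) :
    crossL u (x :: v) = (u.countP fun z => decide (x < z)) + crossL u v := by
  have : crossL u ([x] ++ v) = crossL u [x] + crossL u v := crossL_append_right u [x] v
  simpa [crossL_singleton] using this

lemma invL_gammaGo_hi (p : ℕ → Bool) (hpq : ∀ x y, p x = false → p y = true → y < x) :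
    ∀ (l acc : List ℕ), (∀ x ∈ acc, p x = false) → (acc ≠ [] → l ≠ []) →
      (l ≠ [] → p (l.getLastD 0) = true) →
      invL (gammaGo p acc l) + (acc.reverse ++ l).countP (fun x => !p x)
        = invL (acc.reverse ++ l) := by
  intro l
  induction l with
  | nil =>
    intro acc hacc hne _
    have : acc = [] := by
      by_contra h
      exact (hne h) rfl
    subst this
    simp [gammaGo]
  | cons x xs ih =>
    intro acc hacc hne hlast
    have hlast' := hlast (by simp)
    by_cases h : p x
    · simp only [gammaGo, h, if_true]
      have hR := gammaGo_perm p xs []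
      simp only [List.reverse_nil, List.nil_append] at hR
      rw [invL_append]
      have e1 : invL (x :: acc.reverse) = invL acc.reverse := by
        have : (acc.reverse.countP fun b => decide (b < x)) = 0 := by
          rw [List.countP_eq_zero]
          intro z hz
          have := hpq z x (hacc z (by simpa using hz)) h
          simp; omega
        rw [invL_cons, this]; omega
      have e2 : crossL (x :: acc.reverse) (gammaGo p [] xs)
          = (xs.countP fun b => decide (b < x)) + crossL acc.reverse xs := by
        rw [crossL_cons, hR.countP_eq, crossL_perm (List.Perm.refl _) hR]
      have ihx : invL (gammaGo p [] xs) + xs.countP (fun x => !p x) = invL xs := by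
        have := ih [] (by simp) (by simp) (fun hxs => by
          rw [← getLastD_cons_ne x hxs]; exact hlast')
        simpa using this
      have hrevlen : (acc.reverse.countP fun z => decide (x < z)) = acc.length := by
        have : (acc.reverse.countP fun z => decide (x < z)) = acc.reverse.length :=
          List.countP_eq_length.2 (fun z hz => by
            have := hpq z x (hacc z (by simpa using hz)) h
            simpa using this)
        simpa using this
      have e3 : invL (acc.reverse ++ x :: xs)
          = invL acc.reverse + invL xs + (xs.countP fun b => decide (b < x))
            + acc.length + crossL acc.reverse xs := by
        rw [invL_append, invL_cons, crossL_cons_right, hrevlen]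
        ring
      have e4 : ((acc.reverse ++ x :: xs).countP fun x => !p x)
          = acc.length + xs.countP (fun x => !p x) := by
        rw [List.countP_append, List.countP_cons]
        have : (acc.reverse.countP fun x => !p x) = acc.length := by
          have : (acc.reverse.countP fun x => !p x) = acc.reverse.length :=
            List.countP_eq_length.2 (fun z hz => by simp [hacc z (by simpa using hz)])
          simpa using this
        rw [this]
        simp [h]
      rw [e1, e2, e3, e4]
      omega
    · simp only [gammaGo, h, if_false]
      have hxs : xs ≠ [] := by
        intro hn
        subst hn
        simp at hlast'
        rw [hlast'] at h
        simp at h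
      have := ih (x :: acc) (by
          intro z hz
          rcases List.mem_cons.1 hz with rfl | hz
          · simpa using h
          · exact hacc z hz)
        (fun _ => hxs)
        (fun _ => by rw [← getLastD_cons_ne x hxs]; exact hlast')
      simpa [List.append_assoc] using this

lemma invL_gammaGo_lo (p : ℕ → Bool) (hpq : ∀ x y, p x = false → p y = true → x < y) :
    ∀ (l acc : List ℕ), (∀ x ∈ acc, p x = false) → (acc ≠ [] → l ≠ []) →
      (l ≠ [] → p (l.getLastD 0) = true) →
      invL (gammaGo p acc l)
        = invL (acc.reverse ++ l) + (acc.reverse ++ l).countP (fun x => !p x) := by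
  intro l
  induction l with
  | nil =>
    intro acc hacc hne _
    have : acc = [] := by
      by_contra h
      exact (hne h) rfl
    subst this
    simp [gammaGo, invL]
  | cons x xs ih =>
    intro acc hacc hne hlast
    have hlast' := hlast (by simp)
    by_cases h : p x
    · simp only [gammaGo, h, if_true]
      have hR := gammaGo_perm p xs []
      simp only [List.reverse_nil, List.nil_append] at hR
      rw [invL_append]
      have e1 : invL (x :: acc.reverse) = acc.length + invL acc.reverse := by
        have : (acc.reverse.countP fun b => decide (b < x)) = acc.length := by
          have : (acc.reverse.countP fun b => decide (b < x)) = acc.reverse.length :=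
            List.countP_eq_length.2 (fun z hz => by
              have := hpq z x (hacc z (by simpa using hz)) h
              simpa using this)
          simpa using this
        rw [invL_cons, this]
      have e2 : crossL (x :: acc.reverse) (gammaGo p [] xs)
          = (xs.countP fun b => decide (b < x)) + crossL acc.reverse xs := by
        rw [crossL_cons, hR.countP_eq, crossL_perm (List.Perm.refl _) hR]
      have ihx : invL (gammaGo p [] xs) = invL xs + xs.countP (fun x => !p x) := by
        have := ih [] (by simp) (by simp) (fun hxs => by
          rw [← getLastD_cons_ne x hxs]; exact hlast')
        simpa using this
      have hrev0 : (acc.reverse.countP fun z => decide (x < z)) = 0 := by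
        rw [List.countP_eq_zero]
        intro z hz
        have := hpq z x (hacc z (by simpa using hz)) h
        simp; omega
      have e3 : invL (acc.reverse ++ x :: xs)
          = invL acc.reverse + invL xs + (xs.countP fun b => decide (b < x))
            + crossL acc.reverse xs := by
        rw [invL_append, invL_cons, crossL_cons_right, hrev0]
        ring
      have e4 : ((acc.reverse ++ x :: xs).countP fun x => !p x)
          = acc.length + xs.countP (fun x => !p x) := by
        rw [List.countP_append, List.countP_cons]
        have : (acc.reverse.countP fun x => !p x) = acc.length := by
          have : (acc.reverse.countP fun x => !p x) = acc.reverse.length :=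
            List.countP_eq_length.2 (fun z hz => by simp [hacc z (by simpa using hz)])
          simpa using this
        rw [this]
        simp [h]
      rw [e1, e2, e3, e4]
      omega
    · simp only [gammaGo, h, if_false]
      have hxs : xs ≠ [] := by
        intro hn
        subst hn
        simp at hlast'
        rw [hlast'] at h
        simp at h
      have := ih (x :: acc) (by
          intro z hz
          rcases List.mem_cons.1 hz with rfl | hz
          · simpa using h
          · exact hacc z hz)
        (fun _ => hxs)
        (fun _ => by rw [← getLastD_cons_ne x hxs]; exact hlast')
      simpa [List.append_assoc] using this

def deltaGo (p : ℕ → Bool) : List ℕ → List ℕ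
  | [] => []
  | x :: xs => xs.takeWhile (fun y => !p y) ++ x :: deltaGo p (xs.dropWhile (fun y => !p y))
  termination_by l => l.length
  decreasing_by
    simp only [List.length_cons]
    exact Nat.lt_succ_of_le (List.dropWhile_sublist _).length_le

lemma deltaGo_nil (p : ℕ → Bool) : deltaGo p [] = [] := by rw [deltaGo]

lemma deltaGo_cons (p : ℕ → Bool) (x : ℕ) (xs : List ℕ) :
    deltaGo p (x :: xs)
      = xs.takeWhile (fun y => !p y) ++ x :: deltaGo p (xs.dropWhile (fun y => !p y)) := by
  rw [deltaGo]

lemma split_append (p : ℕ → Bool) (u v : List ℕ) (hu : ∀ y ∈ u, p y = false)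
    (hv : v = [] ∨ ∃ y t, v = y :: t ∧ p y = true) :
    (u ++ v).takeWhile (fun y => !p y) = u ∧ (u ++ v).dropWhile (fun y => !p y) = v := by
  induction u with
  | nil =>
    rcases hv with rfl | ⟨y, t, rfl, hy⟩
    · simp
    · simp [List.takeWhile, List.dropWhile, hy]
  | cons a u ih =>
    have ha : p a = false := hu a (by simp)
    have := ih (fun y hy => hu y (by simp [hy]))
    simp [List.takeWhile, List.dropWhile, ha, this.1, this.2]

lemma gammaGo_head (p : ℕ → Bool) :
    ∀ (l acc : List ℕ), l ≠ [] → p (l.getLastD 0) = true →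
      ∃ y t, gammaGo p acc l = y :: t ∧ p y = true := by
  intro l
  induction l with
  | nil => intro acc h; exact absurd rfl h
  | cons x xs ih =>
    intro acc _ hlast
    by_cases h : p x
    · exact ⟨x, acc.reverse ++ gammaGo p [] xs, by simp [gammaGo, h], h⟩
    · have hxs : xs ≠ [] := by
        intro hn; subst hn; simp at hlast; rw [hlast] at h; simp at h
      have := ih (x :: acc) hxs (by rw [← getLastD_cons_ne x hxs]; exact hlast)
      simpa [gammaGo, h] using this

lemma deltaGo_gammaGo (p : ℕ → Bool) :
    ∀ (l acc : List ℕ), (∀ x ∈ acc, p x = false) → (acc ≠ [] → l ≠ []) →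
      (l ≠ [] → p (l.getLastD 0) = true) →
      deltaGo p (gammaGo p acc l) = acc.reverse ++ l := by
  intro l
  induction l with
  | nil =>
    intro acc hacc hne _
    have : acc = [] := by
      by_contra h
      exact (hne h) rfl
    subst this
    simp [gammaGo, deltaGo_nil]
  | cons x xs ih =>
    intro acc hacc hne hlast
    have hlast' := hlast (by simp)
    by_cases h : p x
    · simp only [gammaGo, h, if_true]
      have hsplit := split_append p acc.reverse (gammaGo p [] xs)
        (fun y hy => hacc y (by simpa using hy))
        (by
          rcases eq_or_ne xs [] with rfl | hxs
          · left; simp [gammaGo]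
          · right
            obtain ⟨y, t, he, hy⟩ := gammaGo_head p xs [] hxs
              (by rw [← getLastD_cons_ne x hxs]; exact hlast')
            exact ⟨y, t, he, hy⟩)
      have ihx : deltaGo p (gammaGo p [] xs) = xs := by
        have := ih [] (by simp) (by simp) (fun hxs => by
          rw [← getLastD_cons_ne x hxs]; exact hlast')
        simpa using this
      show deltaGo p (x :: (acc.reverse ++ gammaGo p [] xs)) = _
      rw [deltaGo_cons, hsplit.1, hsplit.2, ihx]
    · simp only [gammaGo, h, if_false]
      have hxs : xs ≠ [] := by
        intro hn; subst hn; simp at hlast'; rw [hlast'] at h; simp at h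
      have := ih (x :: acc) (by
          intro z hz
          rcases List.mem_cons.1 hz with rfl | hz
          · simpa using h
          · exact hacc z hz)
        (fun _ => hxs)
        (fun _ => by rw [← getLastD_cons_ne x hxs]; exact hlast')
      simpa [List.append_assoc] using this

/-! ### The Foata map -/

def gammaW (a : ℕ) (v : List ℕ) : List ℕ :=
  if v.getLastD 0 ≤ a then gammaGo (fun b => decide (b ≤ a)) [] v
  else gammaGo (fun b => decide (a < b)) [] v

def phiRev : List ℕ → List ℕ
  | [] => []
  | a :: rest => gammaW a (phiRev rest) ++ [a]

def phiF (w : List ℕ) : List ℕ := phiRev w.reverse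

lemma gammaW_perm (a : ℕ) (v : List ℕ) : (gammaW a v).Perm v := by
  unfold gammaW
  split <;> simpa using gammaGo_perm _ v []

lemma phiRev_perm : ∀ l : List ℕ, (phiRev l).Perm l.reverse := by
  intro l
  induction l with
  | nil => simp [phiRev]
  | cons a rest ih =>
    simp only [phiRev, List.reverse_cons]
    exact ((gammaW_perm a _).trans ih).append_right [a]

lemma phiF_perm (w : List ℕ) : (phiF w).Perm w := by
  simpa [phiF] using phiRev_perm w.reverse

lemma phiRev_lastD : ∀ l : List ℕ, (phiRev l).getLastD 0 = l.headD 0 := by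
  intro l
  cases l with
  | nil => rfl
  | cons a rest => simp [phiRev, List.getLastD_concat]

lemma not_le_decide (a : ℕ) : (fun x => !decide (x ≤ a)) = fun x => decide (a < x) := by
  funext x
  by_cases hx : x ≤ a <;> simp [hx] <;> omega

lemma not_lt_decide (a : ℕ) : (fun x => !decide (a < x)) = fun x => decide (x ≤ a) := by
  funext x
  by_cases hx : a < x <;> simp [hx] <;> omega

lemma inv_gammaW_le {a : ℕ} {v : List ℕ} (h : v.getLastD 0 ≤ a) :
    invL (gammaW a v) + v.countP (fun b => decide (a < b)) = invL v := by
  have := invL_gammaGo_hi (fun b => decide (b ≤ a))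
    (fun x y hx hy => by simp at hx hy; omega) v []
    (by simp) (by simp) (fun _ => by simpa using h)
  rw [gammaW, if_pos h]
  simpa [not_le_decide] using this

lemma inv_gammaW_gt {a : ℕ} {v : List ℕ} (h : a < v.getLastD 0) :
    invL (gammaW a v) = invL v + v.countP (fun b => decide (b ≤ a)) := by
  have := invL_gammaGo_lo (fun b => decide (a < b))
    (fun x y hx hy => by simp at hx hy; omega) v []
    (by simp) (by simp) (fun _ => by simpa using h)
  rw [gammaW, if_neg (by omega)]
  simpa [not_lt_decide] using this

/-! ### majL of a concatenation -/

lemma getD_last : ∀ (u : List ℕ), u ≠ [] → u.getD (u.length - 1) 0 = u.getLastD 0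
  | [x], _ => rfl
  | x :: y :: t, _ => by
    have := getD_last (y :: t) (by simp)
    rw [getLastD_cons_ne x (by simp : (y :: t : List ℕ) ≠ [])]
    simpa using this

lemma majL_concat (u : List ℕ) (a : ℕ) :
    majL (u ++ [a]) = majL u + if a < u.getLastD 0 then u.length else 0 := by
  rcases eq_or_ne u [] with rfl | hu
  · simp [majL]
  obtain ⟨m, hm⟩ : ∃ m, u.length = m + 1 := by
    cases u with
    | nil => exact absurd rfl hu
    | cons b t => exact ⟨t.length, rfl⟩
  unfold majL
  rw [List.length_append, hm]
  simp only [List.length_singleton]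
  rw [Finset.sum_range_succ, Finset.sum_range_succ]
  rw [Finset.sum_range_succ (n := m)]
  have hF1 : (if (u ++ [a]).getD (m + 1 + 1) 0 < (u ++ [a]).getD (m + 1) 0 ∧ m + 1 + 1 < m + 1 + 1
      then m + 1 + 1 else 0) = 0 := by simp
  have hG : (if u.getD (m + 1) 0 < u.getD m 0 ∧ m + 1 < m + 1 then m + 1 else 0) = 0 := by simp
  have hsum : ∑ i ∈ Finset.range m,
      (if (u ++ [a]).getD (i + 1) 0 < (u ++ [a]).getD i 0 ∧ i + 1 < m + 1 + 1 then i + 1 else 0)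
      = ∑ i ∈ Finset.range m,
      (if u.getD (i + 1) 0 < u.getD i 0 ∧ i + 1 < m + 1 then i + 1 else 0) := by
    apply Finset.sum_congr rfl
    intro i hi
    have hi' : i < m := Finset.mem_range.1 hi
    rw [List.getD_append u [a] 0 i (by omega), List.getD_append u [a] 0 (i + 1) (by omega)]
    have c1 : i + 1 < m + 1 + 1 := by omega
    have c2 : i + 1 < m + 1 := by omega
    simp [c1, c2]
  have hFm : (if (u ++ [a]).getD (m + 1) 0 < (u ++ [a]).getD m 0 ∧ m + 1 < m + 1 + 1
      then m + 1 else 0) = if a < u.getLastD 0 then m + 1 else 0 := by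
    have e1 : (u ++ [a]).getD (m + 1) 0 = a := by
      rw [List.getD_append_right u [a] 0 (m + 1) (by omega)]
      simp [hm]
    have e2 : (u ++ [a]).getD m 0 = u.getLastD 0 := by
      rw [List.getD_append u [a] 0 m (by omega)]
      have := getD_last u hu
      rw [hm] at this
      simpa using this
    rw [e1, e2]
    simp
  rw [hF1, hG, hsum, hFm]
  ring

/-! ### Main equality inv (φ w) = maj w -/

lemma countP_le_add_gt (a : ℕ) (v : List ℕ) :
    v.countP (fun b => decide (b ≤ a)) + v.countP (fun b => decide (a < b)) = v.length := by
  induction v with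
  | nil => rfl
  | cons x v ih =>
    rw [List.countP_cons, List.countP_cons, List.length_cons]
    by_cases hx : x ≤ a
    · have hx2 : ¬ a < x := by omega
      simp [hx, hx2]
      omega
    · have hx2 : a < x := by omega
      simp [hx, hx2]
      omega

lemma invL_phiRev : ∀ l : List ℕ, invL (phiRev l) = majL l.reverse := by
  intro l
  induction l with
  | nil => simp [phiRev, invL, majL]
  | cons a rest ih =>
    simp only [phiRev, List.reverse_cons]
    rw [majL_concat]
    have hV := phiRev_perm rest
    have hlast : (phiRev rest).getLastD 0 = rest.headD 0 := phiRev_lastD rest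
    have hhead : rest.reverse.getLastD 0 = rest.headD 0 := by
      cases rest with
      | nil => rfl
      | cons b t => simp [List.getLastD_concat]
    have hγ : (gammaW a (phiRev rest)).Perm (phiRev rest) := gammaW_perm a _
    have einv : invL (gammaW a (phiRev rest) ++ [a])
        = invL (gammaW a (phiRev rest))
          + (phiRev rest).countP (fun b => decide (a < b)) := by
      rw [invL_append, crossL_singleton, hγ.countP_eq]
      simp [invL]
    rw [einv]
    by_cases hc : (phiRev rest).getLastD 0 ≤ a
    · have h1 := inv_gammaW_le hc
      have h2 : ¬ a < rest.reverse.getLastD 0 := by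
        rw [hhead, ← hlast]; omega
      rw [if_neg h2, ← ih]
      omega
    · have hc' : a < (phiRev rest).getLastD 0 := by omega
      have h1 := inv_gammaW_gt hc'
      have h2 : a < rest.reverse.getLastD 0 := by rw [hhead, ← hlast]; omega
      rw [if_pos h2, ← ih, h1]
      have h3 := countP_le_add_gt a (phiRev rest)
      have h4 : (phiRev rest).length = rest.reverse.length := hV.length_eq
      omega

lemma invL_phiF (w : List ℕ) : invL (phiF w) = majL w := by
  have := invL_phiRev w.reverse
  simpa [phiF] using this

/-! ### Injectivity -/

lemma gammaW_lastD_hyp {a : ℕ} {v : List ℕ} :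
    gammaW a v = gammaGo (fun b => decide (b ≤ a)) [] v ∧ v.getLastD 0 ≤ a
      ∨ gammaW a v = gammaGo (fun b => decide (a < b)) [] v ∧ a < v.getLastD 0 := by
  unfold gammaW
  by_cases h : v.getLastD 0 ≤ a
  · exact Or.inl ⟨by rw [if_pos h], h⟩
  · exact Or.inr ⟨by rw [if_neg h], by omega⟩

lemma delta_gammaW_le {a : ℕ} {v : List ℕ} (h : v.getLastD 0 ≤ a) :
    deltaGo (fun b => decide (b ≤ a)) (gammaW a v) = v := by
  rw [gammaW, if_pos h]
  have := deltaGo_gammaGo (fun b => decide (b ≤ a)) v [] (by simp) (by simp)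
    (fun _ => by simpa using h)
  simpa using this

lemma delta_gammaW_gt {a : ℕ} {v : List ℕ} (h : a < v.getLastD 0) :
    deltaGo (fun b => decide (a < b)) (gammaW a v) = v := by
  rw [gammaW, if_neg (by omega)]
  have := deltaGo_gammaGo (fun b => decide (a < b)) v [] (by simp) (by simp)
    (fun _ => by simpa using h)
  simpa using this

lemma gammaW_head_le {a : ℕ} {v : List ℕ} (hne : v ≠ []) (h : v.getLastD 0 ≤ a) :
    ∃ y t, gammaW a v = y :: t ∧ y ≤ a := by
  rw [gammaW, if_pos h]
  obtain ⟨y, t, he, hy⟩ := gammaGo_head (fun b => decide (b ≤ a)) v [] hne (by simpa using h)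
  exact ⟨y, t, he, by simpa using hy⟩

lemma gammaW_head_gt {a : ℕ} {v : List ℕ} (hne : v ≠ []) (h : a < v.getLastD 0) :
    ∃ y t, gammaW a v = y :: t ∧ a < y := by
  rw [gammaW, if_neg (by omega)]
  obtain ⟨y, t, he, hy⟩ := gammaGo_head (fun b => decide (a < b)) v [] hne (by simpa using h)
  exact ⟨y, t, he, by simpa using hy⟩

lemma gammaW_ne_nil {a : ℕ} {v : List ℕ} (hne : v ≠ []) : gammaW a v ≠ [] := by
  intro h
  have := (gammaW_perm a v).length_eq
  rw [h] at this
  simp at this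
  exact hne (List.length_eq_zero_iff.1 this.symm)

lemma gammaW_inj (a : ℕ) {v v' : List ℕ} (h : gammaW a v = gammaW a v') : v = v' := by
  by_cases h1 : v.getLastD 0 ≤ a <;> by_cases h2 : v'.getLastD 0 ≤ a
  · rw [← delta_gammaW_le h1, ← delta_gammaW_le h2, h]
  · exfalso
    have h2' : a < v'.getLastD 0 := by omega
    have hv' : v' ≠ [] := by
      intro hn; subst hn; simp at h2'
    rcases eq_or_ne v [] with rfl | hv
    · exact gammaW_ne_nil hv' (by
        have : gammaW a ([] : List ℕ) = [] := by rw [gammaW]; split <;> rfl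
        rw [← h, this])
    · obtain ⟨y, t, he, hy⟩ := gammaW_head_le hv h1
      obtain ⟨y', t', he', hy'⟩ := gammaW_head_gt hv' h2'
      rw [he, he'] at h
      have : y = y' := by injection h
      omega
  · exfalso
    have h1' : a < v.getLastD 0 := by omega
    have hv : v ≠ [] := by
      intro hn; subst hn; simp at h1'
    rcases eq_or_ne v' [] with rfl | hv'
    · exact gammaW_ne_nil hv (by
        have : gammaW a ([] : List ℕ) = [] := by rw [gammaW]; split <;> rfl
        rw [h, this])
    · obtain ⟨y, t, he, hy⟩ := gammaW_head_gt hv h1'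
      obtain ⟨y', t', he', hy'⟩ := gammaW_head_le hv' h2
      rw [he, he'] at h
      have : y = y' := by injection h
      omega
  · have h1' : a < v.getLastD 0 := by omega
    have h2' : a < v'.getLastD 0 := by omega
    rw [← delta_gammaW_gt h1', ← delta_gammaW_gt h2', h]

lemma phiRev_inj : ∀ l1 l2 : List ℕ, phiRev l1 = phiRev l2 → l1 = l2 := by
  intro l1
  induction l1 with
  | nil =>
    intro l2 h
    cases l2 with
    | nil => rfl
    | cons a r => simp [phiRev] at h
  | cons a r ih =>
    intro l2 h
    cases l2 with
    | nil => simp [phiRev] at h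
    | cons a' r' =>
      simp only [phiRev] at h
      obtain ⟨hγ, ha⟩ := List.append_inj' h (by simp)
      have ha' : a = a' := by injection ha
      subst ha'
      rw [ih r' (gammaW_inj a hγ)]

lemma phiF_inj : Function.Injective phiF := by
  intro w1 w2 h
  have := phiRev_inj _ _ h
  exact List.reverse_injective this


/-- Foata's bijection: for any composition `ν`, there is a bijection `Φ` of the set of
words of weight `ν` with itself such that `inv (Φ w) = maj w` for all `w`. -/
theorem stmt1 (ν : List ℕ) :
    ∃ Φ : {w // w ∈ WordSet ν} ≃ {w // w ∈ WordSet ν},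
      ∀ w : {w // w ∈ WordSet ν}, invL (Φ w : List ℕ) = majL (w : List ℕ) := by
  classical
  have hmem : ∀ w : List ℕ, w ∈ WordSet ν ↔ w.Perm (canonicalWord ν) := by
    intro w
    simp [WordSet, List.mem_permutations]
  let f : {w // w ∈ WordSet ν} → {w // w ∈ WordSet ν} :=
    fun w => ⟨phiF w.1, (hmem _).2 ((phiF_perm w.1).trans ((hmem _).1 w.2))⟩
  have hinj : Function.Injective f := by
    intro w1 w2 h
    exact Subtype.ext (phiF_inj (congrArg Subtype.val h))
  have hbij : Function.Bijective f := Finite.injective_iff_bijective.1 hinj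
  exact ⟨Equiv.ofBijective f hbij, fun w => invL_phiF w.1⟩
end

section
/- For 0 ≤ a ≤ n and any integer k, there exists a function h: Word(n-a,a) → ℤ such that q^{ka} [n choose a]_q = Σ_{w ∈ Word(n-a,a)} q^{n·h(w) + inv(w)}. Concretely, for k > 0 one may take h(w) to be the number of indices j with w_j = 2 among the last k positions (indices taken cyclically if k > n). -/
open Finset

/-- The `q`-integer `[k]_q = 1 + q + ⋯ + q^{k-1}` as a rational function in `q = X`. -/
noncomputable def qInt (k : ℕ) : RatFunc ℚ := ∑ i ∈ Finset.range k, RatFunc.X ^ i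

/-- The `q`-factorial `[k]_q!`. -/
noncomputable def qFact (k : ℕ) : RatFunc ℚ := ∏ i ∈ Finset.range k, qInt (i + 1)

/-- The `q`-multinomial coefficient `[n choose ν]_q = [n]_q! / ([ν₁]_q! [ν₂]_q! ⋯)`
where `n = ν₁ + ν₂ + ⋯`. -/
noncomputable def qMultinomial (ν : List ℕ) : RatFunc ℚ :=
  qFact ν.sum / (ν.map qFact).prod

/-- The number of letters `2` among the last `k` positions of `w` (a word of length `n`),
positions being taken cyclically when `k > n`. -/
def lastTwoCount (n k : ℕ) (w : List ℕ) : ℕ :=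
  ∑ j ∈ Finset.range k, if w.getD (n - 1 - j % n) 0 = 2 then 1 else 0

lemma canonicalWord_pair (b a : ℕ) :
    canonicalWord [b, a] = List.replicate b 1 ++ List.replicate a 2 := by
  simp [canonicalWord, List.range_succ]

lemma mem_wordSet {b a : ℕ} {w : List ℕ} :
    w ∈ WordSet [b, a] ↔ w.Perm (List.replicate b 1 ++ List.replicate a 2) := by
  rw [WordSet, List.mem_toFinset, List.mem_permutations, canonicalWord_pair]

lemma ws_length {b a : ℕ} {w : List ℕ} (hw : w ∈ WordSet [b, a]) : w.length = b + a := by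
  have := (mem_wordSet.mp hw).length_eq
  simpa [List.count_replicate] using this

lemma ws_count1 {b a : ℕ} {w : List ℕ} (hw : w ∈ WordSet [b, a]) : w.count 1 = b := by
  have := (mem_wordSet.mp hw).count_eq 1
  simpa [List.count_replicate] using this

lemma ws_count2 {b a : ℕ} {w : List ℕ} (hw : w ∈ WordSet [b, a]) : w.count 2 = a := by
  have := (mem_wordSet.mp hw).count_eq 2
  simpa [List.count_replicate] using this

lemma ws_mem {b a : ℕ} {w : List ℕ} (hw : w ∈ WordSet [b, a]) {x : ℕ} (hx : x ∈ w) :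
    x = 1 ∨ x = 2 := by
  have := (mem_wordSet.mp hw).mem_iff.mp hx
  simp at this
  rcases this with ⟨h, _⟩ | ⟨h, _⟩ <;> omega
lemma invL_append_singleton (w : List ℕ) (x : ℕ) :
    invL (w ++ [x]) = invL w + w.countP (fun b => decide (x < b)) := by
  induction w with
  | nil => simp [invL]
  | cons a l ih =>
      show invL (a :: (l ++ [x])) = _
      rw [invL, ih, List.countP_append, invL, List.countP_cons]
      simp only [List.countP_nil]
      by_cases h : x < a <;> by_cases h2 : a < x <;> simp [h, h2] <;> omega

lemma countP_lt_one {b a : ℕ} {w : List ℕ} (hw : w ∈ WordSet [b, a]) :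
    w.countP (fun c => decide (c < 1)) = 0 := by
  rw [List.countP_eq_zero]
  intro c hc
  rcases ws_mem hw hc with h | h <;> simp [h]

lemma countP_one_lt {b a : ℕ} {w : List ℕ} (hw : w ∈ WordSet [b, a]) :
    w.countP (fun c => decide (1 < c)) = a := by
  rw [← ws_count2 hw, List.count]
  apply List.countP_congr
  intro c hc
  rcases ws_mem hw hc with h | h <;> simp [h]

lemma countP_lt_two {b a : ℕ} {w : List ℕ} (hw : w ∈ WordSet [b, a]) :
    w.countP (fun c => decide (c < 2)) = b := by
  rw [← ws_count1 hw, List.count]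
  apply List.countP_congr
  intro c hc
  rcases ws_mem hw hc with h | h <;> simp [h]

lemma countP_two_lt {b a : ℕ} {w : List ℕ} (hw : w ∈ WordSet [b, a]) :
    w.countP (fun c => decide (2 < c)) = 0 := by
  rw [List.countP_eq_zero]
  intro c hc
  rcases ws_mem hw hc with h | h <;> simp [h]
lemma qInt_add (p q : ℕ) : qInt (p + q) = qInt p + RatFunc.X ^ p * qInt q := by
  induction q with
  | zero => simp [qInt]
  | succ q ih =>
      rw [show p + (q+1) = (p+q)+1 from rfl, qInt, Finset.sum_range_succ, ← qInt, ih,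
        show qInt (q+1) = qInt q + RatFunc.X ^ q by
          rw [qInt, Finset.sum_range_succ, ← qInt]]
      ring

lemma qInt_ne_zero (m : ℕ) : qInt (m + 1) ≠ 0 := by
  have : qInt (m + 1) = algebraMap (Polynomial ℚ) (RatFunc ℚ)
      (∑ i ∈ Finset.range (m + 1), Polynomial.X ^ i) := by
    rw [qInt, map_sum]
    refine Finset.sum_congr rfl fun i _ => ?_
    rw [map_pow, RatFunc.algebraMap_X]
  rw [this]
  simp only [ne_eq, FaithfulSMul.algebraMap_eq_zero_iff]
  intro h
  have h0 := congrArg (Polynomial.coeff · 0) h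
  simp [Polynomial.coeff_X_pow, Finset.sum_ite_eq'] at h0

lemma qFact_ne_zero (m : ℕ) : qFact m ≠ 0 :=
  Finset.prod_ne_zero_iff.mpr fun i _ => qInt_ne_zero i

lemma qFact_succ (m : ℕ) : qFact (m + 1) = qFact m * qInt (m + 1) := by
  rw [qFact, Finset.prod_range_succ, ← qFact]

lemma qMultinomial_pair (b a : ℕ) :
    qMultinomial [b, a] = qFact (b + a) / (qFact b * qFact a) := by
  simp [qMultinomial]

lemma qMultinomial_zero_right (b : ℕ) : qMultinomial [b, 0] = 1 := by
  rw [qMultinomial_pair]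
  simp only [qFact, Finset.range_zero, Finset.prod_empty, mul_one, Nat.add_zero]
  exact div_self (qFact_ne_zero b)

lemma qMultinomial_zero_left (a : ℕ) : qMultinomial [0, a] = 1 := by
  rw [qMultinomial_pair]
  simp only [qFact, Finset.range_zero, Finset.prod_empty, one_mul, Nat.zero_add]
  exact div_self (qFact_ne_zero a)

lemma qMultinomial_rec (b a : ℕ) :
    qMultinomial [b + 1, a + 1]
      = RatFunc.X ^ (a + 1) * qMultinomial [b, a + 1] + qMultinomial [b + 1, a] := by
  rw [qMultinomial_pair, qMultinomial_pair, qMultinomial_pair]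
  have key : qInt (b + 1 + (a + 1)) = qInt (a + 1) + RatFunc.X ^ (a + 1) * qInt (b + 1) := by
    rw [show b + 1 + (a + 1) = (a + 1) + (b + 1) by ring, qInt_add]
  have e1 : b + 1 + (a + 1) = (b + 1 + a) + 1 := by ring
  have e2 : b + (a + 1) = b + 1 + a := by ring
  rw [e1, e2, qFact_succ (b + 1 + a), qFact_succ b, qFact_succ a,
    show b + 1 + a + 1 = b + 1 + (a + 1) by ring, key]
  field_simp [qFact_ne_zero, qInt_ne_zero]
  ring
lemma mem_wordSet_iff {b a : ℕ} {w : List ℕ} :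
    w ∈ WordSet [b, a] ↔ (w.count 1 = b ∧ w.count 2 = a ∧ ∀ x ∈ w, x = 1 ∨ x = 2) := by
  constructor
  · intro hw
    exact ⟨ws_count1 hw, ws_count2 hw, fun x hx => ws_mem hw hx⟩
  · rintro ⟨h1, h2, hm⟩
    rw [mem_wordSet, List.perm_iff_count]
    intro c
    rw [List.count_append, List.count_replicate, List.count_replicate]
    by_cases hc1 : c = 1
    · subst hc1; simpa using h1
    · by_cases hc2 : c = 2
      · subst hc2; simpa using h2
      · have : c ∉ w := fun hc => by rcases hm c hc with h | h <;> simp_all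
        rw [List.count_eq_zero.mpr this]
        simp [Ne.symm hc1, Ne.symm hc2]
lemma wordSet_succ_succ (b a : ℕ) :
    WordSet [b + 1, a + 1]
      = (WordSet [b, a + 1]).image (· ++ [1]) ∪ (WordSet [b + 1, a]).image (· ++ [2]) := by
  ext w
  simp only [Finset.mem_union, Finset.mem_image, mem_wordSet_iff]
  constructor
  · rintro ⟨h1, h2, hm⟩
    have hne : w ≠ [] := by
      intro h; subst h; simp at h1
    have hsplit := List.dropLast_append_getLast hne
    have hlast := List.getLast_mem hne
    rcases hm _ hlast with hx | hx
    · left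
      refine ⟨w.dropLast, ⟨?_, ?_, ?_⟩, by rw [← hx, hsplit]⟩
      · have := congrArg (List.count 1) hsplit
        rw [List.count_append, hx] at this
        simp at this; omega
      · have := congrArg (List.count 2) hsplit
        rw [List.count_append, hx] at this
        simp at this; omega
      · intro x hxm
        exact hm x (by rw [← hsplit]; exact List.mem_append_left _ hxm)
    · right
      refine ⟨w.dropLast, ⟨?_, ?_, ?_⟩, by rw [← hx, hsplit]⟩
      · have := congrArg (List.count 1) hsplit
        rw [List.count_append, hx] at this
        simp at this; omega
      · have := congrArg (List.count 2) hsplit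
        rw [List.count_append, hx] at this
        simp at this; omega
      · intro x hxm
        exact hm x (by rw [← hsplit]; exact List.mem_append_left _ hxm)
  · rintro (⟨u, ⟨h1, h2, hm⟩, rfl⟩ | ⟨u, ⟨h1, h2, hm⟩, rfl⟩) <;>
      refine ⟨?_, ?_, ?_⟩ <;>
      simp [List.count_append, h1, h2] <;>
      intro x hx <;>
      rcases hx with hx | hx <;> first
        | exact hm x hx
        | omega
lemma wordSet_zero_right (b : ℕ) : WordSet [b, 0] = {List.replicate b 1} := by
  ext w
  rw [mem_wordSet, Finset.mem_singleton]
  simp [List.perm_replicate]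

lemma wordSet_zero_left (a : ℕ) : WordSet [0, a] = {List.replicate a 2} := by
  ext w
  rw [mem_wordSet, Finset.mem_singleton]
  simp [List.perm_replicate]

lemma invL_replicate (m x : ℕ) : invL (List.replicate m x) = 0 := by
  induction m with
  | zero => rfl
  | succ m ih =>
      rw [List.replicate_succ, invL, ih, List.countP_eq_zero.mpr]
      intro c hc
      rw [List.eq_of_mem_replicate hc]
      simp

lemma sum_wordSet_succ_succ (b a : ℕ) (f : List ℕ → RatFunc ℚ) :
    ∑ w ∈ WordSet [b + 1, a + 1], f w
      = (∑ u ∈ WordSet [b, a + 1], f (u ++ [1])) + ∑ u ∈ WordSet [b + 1, a], f (u ++ [2]) := by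
  rw [wordSet_succ_succ, Finset.sum_union, Finset.sum_image, Finset.sum_image]
  · intro u _ v _ h
    simpa using h
  · intro u _ v _ h
    simpa using h
  · rw [Finset.disjoint_left]
    rintro w hw1 hw2
    simp only [Finset.mem_image] at hw1 hw2
    obtain ⟨u, _, rfl⟩ := hw1
    obtain ⟨v, _, hv⟩ := hw2
    have := congrArg List.getLast? hv
    simp [List.getLast?_concat] at this

lemma sum_inv_eq : ∀ s b a, b + a = s →
    (∑ w ∈ WordSet [b, a], (RatFunc.X : RatFunc ℚ) ^ invL w) = qMultinomial [b, a] := by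
  intro s
  induction s with
  | zero =>
      intro b a h
      obtain ⟨rfl, rfl⟩ : b = 0 ∧ a = 0 := by omega
      rw [wordSet_zero_left, qMultinomial_zero_left]
      simp [invL]
  | succ s ih =>
      intro b a h
      match b, a with
      | 0, a =>
          rw [wordSet_zero_left, qMultinomial_zero_left]
          simp [invL_replicate]
      | b + 1, 0 =>
          rw [wordSet_zero_right, qMultinomial_zero_right]
          simp [invL_replicate]
      | b + 1, a + 1 =>
          rw [sum_wordSet_succ_succ, qMultinomial_rec]
          have h1 : ∀ u ∈ WordSet [b, a + 1],
              (RatFunc.X : RatFunc ℚ) ^ invL (u ++ [1]) = RatFunc.X ^ (a + 1) * RatFunc.X ^ invL u := by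
            intro u hu
            rw [invL_append_singleton, countP_one_lt hu, ← pow_add]
            ring_nf
          have h2 : ∀ u ∈ WordSet [b + 1, a],
              (RatFunc.X : RatFunc ℚ) ^ invL (u ++ [2]) = RatFunc.X ^ invL u := by
            intro u hu
            rw [invL_append_singleton, countP_two_lt hu, Nat.add_zero]
          rw [Finset.sum_congr rfl h1, Finset.sum_congr rfl h2, ← Finset.mul_sum,
            ih b (a + 1) (by omega), ih (b + 1) a (by omega)]
lemma rotate_mem_wordSet {b a : ℕ} {w : List ℕ} (hw : w ∈ WordSet [b, a]) (m : ℕ) :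
    w.rotate m ∈ WordSet [b, a] := by
  rw [mem_wordSet] at hw ⊢
  exact (w.rotate_perm m).trans hw

lemma getD_rotate_one (w : List ℕ) (i : ℕ) (hi : i < w.length) :
    (w.rotate 1).getD i 0 = w.getD ((i + 1) % w.length) 0 := by
  have h0 : 0 < w.length := (Nat.zero_le i).trans_lt hi
  have h1 : i < (w.rotate 1).length := by rwa [List.length_rotate]
  have h2 : (i + 1) % w.length < w.length := Nat.mod_lt _ h0
  rw [List.getD_eq_getElem _ _ h1, List.getD_eq_getElem _ _ h2, List.getElem_rotate]

lemma sum_getD_two (w : List ℕ) :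
    (∑ j ∈ Finset.range w.length, if w.getD j 0 = 2 then 1 else 0) = w.count 2 := by
  induction w with
  | nil => simp
  | cons x t ih =>
      rw [List.length_cons, Finset.sum_range_succ']
      simp only [List.getD_cons_succ, List.getD_cons_zero, ih, List.count_cons]
      by_cases hx : x = 2 <;> simp [hx] <;> omega

lemma lastTwoCount_full {b a : ℕ} {w : List ℕ} (hw : w ∈ WordSet [b, a]) :
    lastTwoCount (b + a) (b + a) w = a := by
  have hl := ws_length hw
  rw [lastTwoCount]
  have : ∀ j ∈ Finset.range (b + a),
      (if w.getD (b + a - 1 - j % (b + a)) 0 = 2 then 1 else 0)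
        = (if w.getD (b + a - 1 - j) 0 = 2 then 1 else 0) := by
    intro j hj
    rw [Nat.mod_eq_of_lt (Finset.mem_range.mp hj)]
  rw [Finset.sum_congr rfl this,
    Finset.sum_range_reflect (fun j => if w.getD j 0 = 2 then 1 else 0) (b + a), ← hl,
    sum_getD_two, ws_count2 hw]

lemma lastTwoCount_succ (n m : ℕ) (w : List ℕ) :
    lastTwoCount n (m + 1) w
      = lastTwoCount n m w + if w.getD (n - 1 - m % n) 0 = 2 then 1 else 0 := by
  rw [lastTwoCount, Finset.sum_range_succ, ← lastTwoCount]

lemma lastTwoCount_add_period {b a : ℕ} {w : List ℕ} (hw : w ∈ WordSet [b, a]) (m : ℕ) :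
    lastTwoCount (b + a) (m + (b + a)) w = lastTwoCount (b + a) m w + a := by
  induction m with
  | zero => simpa [lastTwoCount] using lastTwoCount_full hw
  | succ m ih =>
      rw [show m + 1 + (b + a) = (m + (b + a)) + 1 by ring, lastTwoCount_succ, ih,
        lastTwoCount_succ, Nat.add_mod_right]
      ring

lemma lastTwoCount_add_mul_period {b a : ℕ} {w : List ℕ} (hw : w ∈ WordSet [b, a]) (m d : ℕ) :
    lastTwoCount (b + a) (m + (b + a) * d) w = lastTwoCount (b + a) m w + a * d := by
  induction d with
  | zero => simp
  | succ d ih =>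
      rw [show m + (b + a) * (d + 1) = (m + (b + a) * d) + (b + a) by ring,
        lastTwoCount_add_period hw, ih]
      ring
lemma lastTwoCount_rotate {n m : ℕ} {w : List ℕ} (hl : w.length = n) (hm : m + 1 ≤ n) :
    lastTwoCount n (m + 1) (w.rotate 1)
      = lastTwoCount n m w + (if w.getD 0 0 = 2 then 1 else 0) := by
  have h0 : 0 < n := by omega
  rw [lastTwoCount, Finset.sum_range_succ']
  congr 1
  · rw [lastTwoCount]
    apply Finset.sum_congr rfl
    intro j hj
    rw [Finset.mem_range] at hj
    have e1 : (j + 1) % n = j + 1 := Nat.mod_eq_of_lt (by omega)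
    have e2 : j % n = j := Nat.mod_eq_of_lt (by omega)
    rw [e1, e2, getD_rotate_one w _ (by omega), hl]
    congr 2
    have : n - 1 - (j + 1) + 1 = n - 1 - j := by omega
    rw [this, Nat.mod_eq_of_lt (by omega)]
  · rw [Nat.zero_mod, getD_rotate_one w _ (by omega), hl, Nat.sub_zero]
    have : n - 1 + 1 = n := by omega
    rw [this, Nat.mod_self]

lemma invL_rotate {b a : ℕ} {w : List ℕ} (hw : w ∈ WordSet [b, a]) (h0 : 0 < b + a) :
    (invL (w.rotate 1) : ℤ)
      = invL w + a - (b + a) * (if w.getD 0 0 = 2 then 1 else 0) := by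
  have hl := ws_length hw
  cases w with
  | nil => rw [List.length_nil] at hl; omega
  | cons x t =>
    have hx : x = 1 ∨ x = 2 := ws_mem hw (by simp)
    have hrot : (x :: t).rotate 1 = t ++ [x] := by
      rw [List.rotate_cons_succ, List.rotate_zero]
    have hinv : invL (x :: t) = t.countP (fun c => decide (c < x)) + invL t := rfl
    rw [hrot, invL_append_singleton, hinv]
    rcases hx with rfl | rfl
    · have hc1 := countP_lt_one hw
      have hc2 := countP_one_lt hw
      rw [List.countP_cons] at hc1 hc2
      simp only [List.getD_cons_zero, decide_eq_true_eq, lt_self_iff_false, if_false,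
        Nat.add_zero, OfNat.one_ne_ofNat, if_false] at hc1 hc2 ⊢
      push_cast
      omega
    · have hc1 := countP_lt_two hw
      have hc2 := countP_two_lt hw
      rw [List.countP_cons] at hc1 hc2
      simp only [List.getD_cons_zero, decide_eq_true_eq, lt_self_iff_false, if_false,
        Nat.add_zero, if_true] at hc1 hc2 ⊢
      push_cast
      omega
lemma main_ident (b a : ℕ) : ∀ m : ℕ, m ≤ b + a →
    (RatFunc.X : RatFunc ℚ) ^ ((m * a : ℕ) : ℤ) * qMultinomial [b, a]
      = ∑ w ∈ WordSet [b, a],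
          (RatFunc.X : RatFunc ℚ) ^ (((b + a : ℕ) : ℤ) * lastTwoCount (b + a) m w + invL w) := by
  intro m
  induction m with
  | zero =>
      intro _
      simp only [Nat.zero_mul, Nat.cast_zero, zpow_zero, one_mul]
      rw [← sum_inv_eq (b + a) b a rfl]
      apply Finset.sum_congr rfl
      intro w _
      have h0 : lastTwoCount (b + a) 0 w = 0 := by simp [lastTwoCount]
      rw [h0]
      push_cast
      rw [mul_zero, zero_add, zpow_natCast]
  | succ m ih =>
      intro hm1
      have hm : m ≤ b + a := by omega
      have hX : (RatFunc.X : RatFunc ℚ) ≠ 0 := RatFunc.X_ne_zero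
      have e : (((m + 1) * a : ℕ) : ℤ) = (a : ℤ) + ((m * a : ℕ) : ℤ) := by push_cast; ring
      rw [e, zpow_add₀ hX, mul_assoc, ih hm, Finset.mul_sum]
      rw [Finset.sum_congr rfl (g := fun w => (RatFunc.X : RatFunc ℚ)
        ^ ((a : ℤ) + (((b + a : ℕ) : ℤ) * lastTwoCount (b + a) m w + invL w)))
        (fun w _ => (zpow_add₀ hX _ _).symm)]
      apply Finset.sum_nbij' (fun v => v.rotate 1) (fun w => w.rotate (b + a - 1))
      · intro v hv; exact rotate_mem_wordSet hv 1
      · intro v hv; exact rotate_mem_wordSet hv (b + a - 1)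
      · intro v hv
        rw [List.rotate_rotate, show 1 + (b + a - 1) = b + a by omega, ← ws_length hv,
          List.rotate_length]
      · intro v hv
        rw [List.rotate_rotate, show b + a - 1 + 1 = b + a by omega, ← ws_length hv,
          List.rotate_length]
      · intro v hv
        congr 1
        rw [lastTwoCount_rotate (ws_length hv) hm1, invL_rotate hv (by omega)]
        by_cases hv2 : v.getD 0 0 = 2 <;> simp only [hv2, if_true, if_false] <;>
          push_cast <;> ring
/-- For `0 ≤ a ≤ n` and `k ∈ ℤ` there is a statistic `h` on words with `n - a` ones and
`a` twos such that `q^{ka} [n choose a]_q = Σ_w q^{n·h(w) + inv(w)}`; moreover for `k > 0`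
one may take `h(w)` to be the number of `2`s among the last `k` letters of `w` (cyclically). -/
theorem stmt3 (n a : ℕ) (ha : a ≤ n) (k : ℤ) :
    ∃ h : List ℕ → ℤ,
      (RatFunc.X : RatFunc ℚ) ^ (k * a) * qMultinomial [n - a, a]
        = (∑ w ∈ WordSet [n - a, a],
            (RatFunc.X : RatFunc ℚ) ^ ((n : ℤ) * h w + invL w)) ∧
      (0 < k → ∀ w ∈ WordSet [n - a, a], h w = lastTwoCount n k.toNat w) := by
  by_cases hn : n = 0
  · subst hn
    have ha0 : a = 0 := by omega
    subst ha0
    refine ⟨fun w => (lastTwoCount 0 k.toNat w : ℤ), ?_, fun _ w _ => rfl⟩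
    rw [show ((0 : ℕ) - 0) = 0 from rfl, qMultinomial_zero_left, wordSet_zero_left]
    simp [invL]
  · obtain ⟨b, rfl⟩ : ∃ b, n = b + a := ⟨n - a, by omega⟩
    have hsub : b + a - a = b := by omega
    rw [hsub]
    have hpos : 0 < b + a := by omega
    have hX : (RatFunc.X : RatFunc ℚ) ≠ 0 := RatFunc.X_ne_zero
    have hN0 : (0 : ℤ) < ((b + a : ℕ) : ℤ) := by exact_mod_cast hpos
    set d : ℤ := k / ((b + a : ℕ) : ℤ) with hd
    set r : ℤ := k % ((b + a : ℕ) : ℤ) with hrdef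
    have hr0 : 0 ≤ r := Int.emod_nonneg k (ne_of_gt hN0)
    have hrN : r < ((b + a : ℕ) : ℤ) := Int.emod_lt_of_pos k hN0
    set m : ℕ := r.toNat with hmdef
    have hmr : (m : ℤ) = r := Int.toNat_of_nonneg hr0
    have hk : k = ((b + a : ℕ) : ℤ) * d + m := by
      rw [hmr, hrdef, hd]
      exact (Int.mul_ediv_add_emod k _).symm
    have hm : m ≤ b + a := by omega
    refine ⟨fun w => (lastTwoCount (b + a) m w : ℤ) + a * d, ?_, ?_⟩
    · have he : k * (a : ℤ) = ((m * a : ℕ) : ℤ) + (((b + a : ℕ) : ℤ) * a) * d := by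
        rw [hk]; push_cast; ring
      rw [he, zpow_add₀ hX, mul_comm ((RatFunc.X : RatFunc ℚ) ^ ((m * a : ℕ) : ℤ)),
        mul_assoc, main_ident b a m hm, Finset.mul_sum]
      apply Finset.sum_congr rfl
      intro w _
      rw [← zpow_add₀ hX]
      congr 1
      push_cast
      ring
    · intro hk0 w hw
      have hd0 : 0 ≤ d := Int.ediv_nonneg hk0.le hN0.le
      have htn : k.toNat = m + (b + a) * d.toNat := by
        have : (k.toNat : ℤ) = ((m + (b + a) * d.toNat : ℕ) : ℤ) := by
          rw [Int.toNat_of_nonneg hk0.le, hk]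
          push_cast
          rw [Int.toNat_of_nonneg hd0]
          ring
        exact_mod_cast this
      rw [htn, lastTwoCount_add_mul_period hw m d.toNat]
      push_cast
      rw [Int.toNat_of_nonneg hd0]
end

section
/- Let w ∈ Word(ν) and let w' be the word obtained by deleting all letters equal to 1, and w'' the word obtained by replacing every letter greater than 1 by 2. Then inv(w) = inv(w') + inv(w''), and the map w ↦ (w', w'') is a bijection from Word(ν_1,...,ν_m) to Word(ν_2,...,ν_m) × Word(ν_1, n - ν_1). -/
open Finset

section Aux

lemma sum_map_range' (f : ℕ → ℕ) (n : ℕ) :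
    ((List.range n).map f).sum = ∑ i ∈ Finset.range n, f i := by
  induction n with
  | zero => simp
  | succ n ih => rw [List.range_succ]; simp [ih, Finset.sum_range_succ]

lemma count_canonical_zero (ν : List ℕ) : (canonicalWord ν).count 0 = 0 := by
  rw [canonicalWord, List.count_flatMap]
  simp [Function.comp_def, List.count_replicate]

lemma count_canonical_succ (ν : List ℕ) (k : ℕ) :
    (canonicalWord ν).count (k+1) = ν.getD k 0 := by
  rw [canonicalWord, List.count_flatMap]
  simp only [Function.comp_def, List.count_replicate, beq_iff_eq]
  rw [sum_map_range']
  have : ∀ i ∈ Finset.range ν.length, (if i+1 = k+1 then ν.getD i 0 else 0)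
      = if i = k then ν.getD i 0 else 0 := by
    intro i _
    simp [Nat.succ_inj]
  rw [Finset.sum_congr rfl this, Finset.sum_ite_eq' (Finset.range ν.length) k]
  split
  · rfl
  · rename_i h
    simp only [Finset.mem_range, not_lt] at h
    rw [List.getD_eq_default _ _ h]

lemma length_canonical (ν : List ℕ) : (canonicalWord ν).length = ν.sum := by
  rw [canonicalWord, List.length_flatMap]
  simp only [Function.comp_def, List.length_replicate, List.map_map]
  rw [sum_map_range']
  induction ν with
  | nil => simp
  | cons a l ih =>
      rw [List.length_cons, Finset.sum_range_succ']
      simp only [List.getD_cons_succ, List.getD_cons_zero, List.sum_cons]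
      rw [ih]; ring

lemma mem_WordSet (ν : List ℕ) (w : List ℕ) :
    w ∈ WordSet ν ↔ w.Perm (canonicalWord ν) := by
  simp [WordSet, List.mem_toFinset, List.mem_permutations]

lemma mem_WordSet_iff (ν : List ℕ) (w : List ℕ) :
    w ∈ WordSet ν ↔ (w.count 0 = 0 ∧ ∀ k, w.count (k+1) = ν.getD k 0) := by
  rw [mem_WordSet, List.perm_iff_count]
  constructor
  · intro h
    exact ⟨by rw [h 0, count_canonical_zero],
      fun k => by rw [h (k+1), count_canonical_succ]⟩
  · rintro ⟨h0, hs⟩ x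
    cases x with
    | zero => rw [h0, count_canonical_zero]
    | succ k => rw [hs k, count_canonical_succ]

lemma split_lt (a : ℕ) (ha : 2 ≤ a) (l : List ℕ) (hl : ∀ x ∈ l, 1 ≤ x) :
    l.countP (fun b => decide (b < a))
      = l.count 1 + l.countP (fun b => decide (b < a) && decide (b ≠ 1)) := by
  induction l with
  | nil => simp
  | cons b l ih =>
      have hb := hl b List.mem_cons_self
      have ih' := ih fun x hx => hl x (List.mem_cons_of_mem b hx)
      rw [List.countP_cons, List.countP_cons, List.count_cons, ih']
      by_cases h : b = 1
      · subst h
        simp [Nat.lt_of_lt_of_le Nat.one_lt_two ha]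
        omega
      · simp [h]
        omega

lemma inv_split (w : List ℕ) (h : ∀ x ∈ w, 1 ≤ x) :
    invL w = invL (w.filter fun x => x ≠ 1)
      + invL (w.map fun x => if x = 1 then 1 else 2) := by
  induction w with
  | nil => simp [invL]
  | cons a l ih =>
      have ha := h a List.mem_cons_self
      have hl : ∀ x ∈ l, 1 ≤ x := fun x hx => h x (List.mem_cons_of_mem a hx)
      have ih' := ih hl
      by_cases h1 : a = 1
      · subst h1
        have c0 : l.countP (fun b => decide (b < 1)) = 0 := by
          rw [List.countP_eq_zero]
          intro x hx
          simpa using Nat.not_lt.mpr (hl x hx)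
        have c1 : (l.map fun x => if x = 1 then 1 else 2).countP
            (fun b => decide (b < 1)) = 0 := by
          rw [List.countP_eq_zero]
          intro x hx
          obtain ⟨y, -, rfl⟩ := List.mem_map.mp hx
          split <;> simp
        have hfc : ((1:ℕ) :: l).filter (fun x => x ≠ 1) = l.filter fun x => x ≠ 1 := by simp
        have hmc : ((1:ℕ) :: l).map (fun x => if x = 1 then 1 else 2)
            = 1 :: l.map fun x => if x = 1 then 1 else 2 := by simp
        rw [hfc, hmc]
        show (l.countP fun b => decide (b < 1)) + invL l
            = invL (l.filter fun x => x ≠ 1)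
              + ((l.map fun x => if x = 1 then 1 else 2).countP (fun b => decide (b < 1))
                 + invL (l.map fun x => if x = 1 then 1 else 2))
        rw [c0, c1]
        omega
      · have ha2 : 2 ≤ a := by omega
        have hfc : (a :: l).filter (fun x => x ≠ 1) = a :: l.filter (fun x => x ≠ 1) := by
          simp [List.filter_cons, h1]
        have hmc : (a :: l).map (fun x => if x = 1 then 1 else 2)
            = 2 :: l.map (fun x => if x = 1 then 1 else 2) := by
          simp [h1]
        rw [hfc, hmc]
        show (l.countP fun b => decide (b < a)) + invL l
            = ((l.filter fun x => x ≠ 1).countP (fun b => decide (b < a))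
                 + invL (l.filter fun x => x ≠ 1))
              + ((l.map fun x => if x = 1 then 1 else 2).countP (fun b => decide (b < 2))
                 + invL (l.map fun x => if x = 1 then 1 else 2))
        have e1 : (l.filter fun x => x ≠ 1).countP (fun b => decide (b < a))
            = l.countP (fun b => decide (b < a) && decide (b ≠ 1)) := by
          rw [List.countP_filter]
        have e2 : (l.map fun x => if x = 1 then 1 else 2).countP (fun b => decide (b < 2))
            = l.count 1 := by
          rw [List.countP_map, List.count_eq_countP]
          apply List.countP_congr
          intro x hx
          by_cases hx1 : x = 1 <;> simp [hx1, Function.comp]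
        rw [e1, e2, split_lt a ha2 l hl]
        omega

lemma recon (w₁ : List ℕ) : ∀ w₂ : List ℕ,
    (w₁.filter fun x => x ≠ 1) = (w₂.filter fun x => x ≠ 1) →
    (w₁.map fun x => if x = 1 then 1 else 2) = (w₂.map fun x => if x = 1 then 1 else 2) →
    w₁ = w₂ := by
  induction w₁ with
  | nil => intro w₂ _ hm; cases w₂ with
      | nil => rfl
      | cons b l => simp at hm
  | cons a l ih =>
      intro w₂ hf hm
      cases w₂ with
      | nil => simp at hm
      | cons b m =>
          simp only [List.map_cons, List.cons.injEq] at hm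
          obtain ⟨hab, hm'⟩ := hm
          by_cases ha : a = 1
          · by_cases hb : b = 1
            · subst ha hb
              rw [List.filter_cons_of_neg (by simp), List.filter_cons_of_neg (by simp)] at hf
              rw [ih m hf hm']
            · rw [if_pos ha, if_neg hb] at hab; omega
          · by_cases hb : b = 1
            · rw [if_neg ha, if_pos hb] at hab; omega
            · rw [List.filter_cons_of_pos (by simpa using ha),
                  List.filter_cons_of_pos (by simpa using hb)] at hf
              simp only [List.cons.injEq] at hf
              rw [hf.1, ih m hf.2 hm']

def mergeW : List ℕ → List ℕ → List ℕ
  | _, [] => []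
  | u, c :: v => if c = 1 then 1 :: mergeW u v else u.headI :: mergeW u.tail v

lemma mergeW_spec : ∀ (v u : List ℕ), (∀ x ∈ u, 2 ≤ x) → (∀ c ∈ v, c = 1 ∨ c = 2) →
    v.count 2 = u.length →
    ((mergeW u v).filter fun x => x ≠ 1) = u ∧
    ((mergeW u v).map fun x => if x = 1 then 1 else 2) = v := by
  intro v
  induction v with
  | nil =>
      intro u _ _ hc
      simp at hc
      simp [mergeW, List.length_eq_zero_iff.mp hc.symm]
  | cons c v ih =>
      intro u hu hv hc
      rcases hv c List.mem_cons_self with h1 | h2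
      · subst h1
        rw [List.count_cons] at hc
        norm_num at hc
        obtain ⟨hf, hm⟩ := ih u hu (fun c hcv => hv c (List.mem_cons_of_mem _ hcv)) hc
        refine ⟨?_, ?_⟩
        · show ((1 :: mergeW u v).filter fun x => x ≠ 1) = u
          rw [List.filter_cons_of_neg (by simp)]
          exact hf
        · show ((1 :: mergeW u v).map fun x => if x = 1 then 1 else 2) = 1 :: v
          rw [List.map_cons, hm, if_pos rfl]
      · subst h2
        rw [List.count_cons] at hc
        norm_num at hc
        cases u with
        | nil => simp at hc
        | cons a u =>
            have ha : 2 ≤ a := hu a List.mem_cons_self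
            simp only [List.length_cons] at hc
            have hc' : v.count 2 = u.length := by omega
            obtain ⟨hf, hm⟩ := ih u (fun x hx => hu x (List.mem_cons_of_mem _ hx))
              (fun c hcv => hv c (List.mem_cons_of_mem _ hcv)) hc'
            have hme : mergeW (a :: u) (2 :: v) = a :: mergeW u v := by
              simp [mergeW]
            rw [hme]
            refine ⟨?_, ?_⟩
            · rw [List.filter_cons_of_pos (by simp; omega)]
              rw [hf]
            · rw [List.map_cons, hm, if_neg (by omega)]

lemma count_filter_ne (w : List ℕ) (x : ℕ) (hx : x ≠ 1) :
    (w.filter fun y => y ≠ 1).count x = w.count x :=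
  List.count_filter (by simpa using hx)

lemma count_filter_one (w : List ℕ) : (w.filter fun y => y ≠ 1).count 1 = 0 := by
  rw [List.count_eq_zero]
  intro h
  have := List.of_mem_filter h
  simp at this

lemma count_map_one (w : List ℕ) :
    (w.map fun x => if x = 1 then 1 else 2).count 1 = w.count 1 := by
  rw [List.count_eq_countP, List.countP_map, List.count_eq_countP]
  apply List.countP_congr
  intro x _
  by_cases hx1 : x = 1 <;> simp [hx1, Function.comp]

lemma count_map_two' (w : List ℕ) :
    (w.map fun x => if x = 1 then 1 else 2).count 2 + w.count 1 = w.length := by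
  induction w with
  | nil => simp
  | cons a l ih =>
      rw [List.map_cons, List.count_cons, List.count_cons, List.length_cons]
      by_cases ha : a = 1 <;> simp [ha] <;> omega

lemma length_filter_ne (w : List ℕ) :
    (w.filter fun y => y ≠ 1).length + w.count 1 = w.length := by
  induction w with
  | nil => simp
  | cons a l ih =>
      by_cases ha : a = 1
      · rw [List.filter_cons_of_neg (by simp [ha]), List.count_cons, List.length_cons,
            if_pos (by simp [ha])]
        omega
      · rw [List.filter_cons_of_pos (by simp [ha]), List.count_cons, List.length_cons,
            List.length_cons, if_neg (by simp [ha])]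
        omega

lemma count_map_zero (w : List ℕ) :
    (w.map fun x => if x = 1 then 1 else 2).count 0 = 0 := by
  rw [List.count_eq_zero]
  intro h
  obtain ⟨y, -, hy⟩ := List.mem_map.mp h
  by_cases hy1 : y = 1 <;> simp [hy1] at hy

lemma count_map_ge3 (w : List ℕ) (k : ℕ) :
    (w.map fun x => if x = 1 then 1 else 2).count (k+3) = 0 := by
  rw [List.count_eq_zero]
  intro h
  obtain ⟨y, -, hy⟩ := List.mem_map.mp h
  by_cases hy1 : y = 1 <;> simp [hy1] at hy

end Aux

/-- For `w` a word of weight `ν` let `w'` be obtained by deleting all letters `1` and `w''`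
by replacing every letter `> 1` by `2`.  Then `inv w = inv w' + inv w''`, and
`w ↦ (w', w'')` is a bijection from `Word(ν₁,…,ν_m)` onto
`Word(ν₂,…,ν_m) × Word(ν₁, n - ν₁)` (the first factor written in the letters `2,…,m`). -/
theorem stmt6 (ν : List ℕ) :
    (∀ w ∈ WordSet ν,
      invL w = invL (w.filter fun x => x ≠ 1) + invL (w.map fun x => if x = 1 then 1 else 2)) ∧
    Set.BijOn
      (fun w : List ℕ => (w.filter fun x => x ≠ 1, w.map fun x => if x = 1 then 1 else 2))
      (WordSet ν : Set (List ℕ))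
      {p : List ℕ × List ℕ |
        (p.1.count 0 = 0 ∧ p.1.count 1 = 0 ∧ ∀ k : ℕ, p.1.count (k + 2) = ν.getD (k + 1) 0) ∧
        p.2 ∈ (WordSet [ν.getD 0 0, ν.sum - ν.getD 0 0] : Set (List ℕ))} := by
  have hpos : ∀ w ∈ WordSet ν, ∀ x ∈ w, 1 ≤ x := by
    intro w hw x hx
    obtain ⟨h0, -⟩ := (mem_WordSet_iff ν w).mp hw
    rcases Nat.eq_zero_or_pos x with rfl | h
    · exact absurd hx (List.count_eq_zero.mp h0)
    · exact h
  constructor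
  · intro w hw
    exact inv_split w (hpos w hw)
  constructor
  · -- MapsTo
    intro w hw
    obtain ⟨h0, hs⟩ := (mem_WordSet_iff ν w).mp hw
    have hlen : w.length = ν.sum := by
      rw [((mem_WordSet ν w).mp hw).length_eq, length_canonical]
    refine ⟨⟨?_, ?_, ?_⟩, ?_⟩
    · rw [count_filter_ne w 0 (by omega), h0]
    · exact count_filter_one w
    · intro k
      rw [count_filter_ne w (k+2) (by omega), hs (k+1)]
    · show _ ∈ WordSet _
      rw [mem_WordSet_iff]
      refine ⟨count_map_zero w, fun k => ?_⟩
      match k with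
      | 0 => rw [count_map_one w, hs 0]; rfl
      | 1 =>
          have h1 := count_map_two' w
          have h3 : w.count 1 = ν.getD 0 0 := by simpa using hs 0
          show (w.map fun x => if x = 1 then 1 else 2).count 2
              = [ν.getD 0 0, ν.sum - ν.getD 0 0].getD 1 0
          simp only [List.getD_cons_succ, List.getD_cons_zero]
          omega
      | (k+2) => rw [count_map_ge3 w k]; rfl
  constructor
  · -- InjOn
    intro w₁ _ w₂ _ h
    simp only [Prod.mk.injEq] at h
    exact recon w₁ w₂ h.1 h.2
  · -- SurjOn
    rintro ⟨u, v⟩ ⟨⟨hu0, hu1, huk⟩, hv⟩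
    have hv' := (mem_WordSet_iff _ v).mp hv
    obtain ⟨hv0, hvk⟩ := hv'
    have hv1 : v.count 1 = ν.getD 0 0 := by simpa using hvk 0
    have hv2 : v.count 2 = ν.sum - ν.getD 0 0 := by simpa using hvk 1
    have hv3 : ∀ k, v.count (k+3) = 0 := by
      intro k
      have := hvk (k+2)
      simpa using this
    -- elements of u
    have hu : ∀ x ∈ u, 2 ≤ x := by
      intro x hx
      rcases x with _ | _ | x
      · exact absurd hx (List.count_eq_zero.mp hu0)
      · exact absurd hx (List.count_eq_zero.mp hu1)
      · omega
    -- elements of v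
    have hvmem : ∀ c ∈ v, c = 1 ∨ c = 2 := by
      intro c hc
      rcases c with _ | _ | _ | c
      · exact absurd hc (List.count_eq_zero.mp hv0)
      · left; rfl
      · right; rfl
      · exact absurd hc (List.count_eq_zero.mp (hv3 c))
    -- u is a permutation of the filtered canonical word
    have hperm : u.Perm ((canonicalWord ν).filter fun y => y ≠ 1) := by
      rw [List.perm_iff_count]
      intro x
      rcases x with _ | _ | x
      · rw [hu0, count_filter_ne _ 0 (by omega), count_canonical_zero]
      · rw [hu1, count_filter_one]
      · rw [huk x, count_filter_ne _ (x+2) (by omega), count_canonical_succ]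
    have hlenu : u.length = ν.sum - ν.getD 0 0 := by
      rw [hperm.length_eq]
      have h1 := length_filter_ne (canonicalWord ν)
      have h3 : (canonicalWord ν).count 1 = ν.getD 0 0 := count_canonical_succ ν 0
      have h4 : (canonicalWord ν).length = ν.sum := length_canonical ν
      omega
    have hcnt : v.count 2 = u.length := by omega
    obtain ⟨hf, hm⟩ := mergeW_spec v u hu hvmem hcnt
    refine ⟨mergeW u v, ?_, ?_⟩
    · show _ ∈ WordSet ν
      rw [mem_WordSet_iff]
      constructor
      · rw [← count_filter_ne (mergeW u v) 0 (by omega), hf, hu0]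
      · intro k
        rcases k with _ | k
        · have : (mergeW u v).count 1
              = ((mergeW u v).map fun x => if x = 1 then 1 else 2).count 1 := by
            rw [count_map_one]
          rw [this, hm, hv1]
        · rw [← count_filter_ne (mergeW u v) (k+2) (by omega), hf, huk k]
    · show (_, _) = (u, v)
      rw [hf, hm]
end

section
/- Let μ = (μ,...,μ) (n copies) and let T_0 ≤ ··· ≤ T_{n-1} be a weakly increasing n-tuple of semistandard tableaux of shape μ, with ρ the composition recording the multiplicities of equal consecutive tableaux. Then Inv(T_0,...,T_{n-1}) - d_μ lies in the subgroup of ℤ generated by ρ_1, ρ_2, ..., where d_μ = min{Inv(T) : T ∈ SSTab(μ)}. -/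
open Finset

attribute [local instance] Classical.propDecidable

/-- The cells of the Young diagram with row lengths `μ` (0-based row `i`, column `j`). -/
abbrev Cell (μ : List ℕ) := Σ i : Fin μ.length, Fin (μ.get i)

/-- The content `c(u) = (column) - (row)` of a cell. -/
def content {μ : List ℕ} (c : Cell μ) : ℤ := (c.2 : ℤ) - (c.1 : ℤ)

/-- A tableau of shape `μ` (entries in `ℕ`, positive) is semistandard if its rows weakly
increase and its columns strictly increase. -/
def IsSSYT {μ : List ℕ} (T : Cell μ → ℕ) : Prop :=
  (∀ c, 1 ≤ T c) ∧
  (∀ c c' : Cell μ, c.1 = c'.1 → (c.2 : ℕ) ≤ (c'.2 : ℕ) → T c ≤ T c') ∧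
  (∀ c c' : Cell μ, (c.1 : ℕ) < (c'.1 : ℕ) → (c.2 : ℕ) = (c'.2 : ℕ) → T c < T c')

/-- The LLT inversion statistic of an `n`-tuple `TT` of tableaux of shape `μ`: the number of
pairs of entries `T_i(u) > T_j(v)` with either `i < j` and `c(u) = c(v)`, or `i > j` and
`c(u) = c(v) - 1`. -/
noncomputable def InvT {μ : List ℕ} {n : ℕ} (TT : Fin n → Cell μ → ℕ) : ℕ :=
  (univ.filter fun p : (Fin n × Cell μ) × (Fin n × Cell μ) =>
      TT p.2.1 p.2.2 < TT p.1.1 p.1.2 ∧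
      ((p.1.1 < p.2.1 ∧ content p.1.2 = content p.2.2) ∨
       (p.2.1 < p.1.1 ∧ content p.1.2 = content p.2.2 - 1))).card

/-- The reading word of a tableau of shape `μ`: rows read left to right, top to bottom. -/
def readWord {μ : List ℕ} (T : Cell μ → ℕ) : List ℕ :=
  (List.range μ.length).flatMap fun i =>
    (List.range (μ.getD i 0)).map fun j =>
      if h : i < μ.length then
        if h' : j < μ.get ⟨i, h⟩ then T ⟨⟨i, h⟩, ⟨j, h'⟩⟩ else 0
      else 0

/-- The embedding of tuples of tableaux with entries in `Fin M` (entry `e` standing for the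
value `e + 1`) into tuples of tableaux with entries in `ℕ`. -/
def tupEmb (μ : List ℕ) (n M : ℕ) : (Fin n → Cell μ → Fin M) ↪ (Fin n → Cell μ → ℕ) :=
  ⟨fun TT a c => (TT a c : ℕ) + 1, by
    intro x y hxy
    funext a c
    have h := congrFun (congrFun hxy a) c
    dsimp only at h
    have h' : (x a c : ℕ) = (y a c : ℕ) := by omega
    exact Fin.ext h'⟩

/-- `SSTabSet μ n ν`: the (finite) set of `n`-tuples of semistandard tableaux of shape `μ`
with total weight `ν` (so all entries lie in `{1, …, ν.length}`), realized as tuples of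
functions `Cell μ → ℕ`. -/
noncomputable def SSTabSet (μ : List ℕ) (n : ℕ) (ν : List ℕ) :
    Finset (Fin n → Cell μ → ℕ) :=
  ((univ : Finset (Fin n → Cell μ → Fin ν.length)).map (tupEmb μ n ν.length)).filter
    fun TT => (∀ a, IsSSYT (TT a)) ∧
      ∀ k ∈ Finset.range ν.length,
        (univ.filter fun p : Fin n × Cell μ => TT p.1 p.2 = k + 1).card = ν.getD k 0

/-- `d_μ`: the minimal LLT inversion number over all `n`-tuples of semistandard tableaux of
shape `μ`. -/
noncomputable def dMin (μ : List ℕ) (n : ℕ) : ℕ :=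
  sInf {m | ∃ TT : Fin n → Cell μ → ℕ, (∀ a, IsSSYT (TT a)) ∧ InvT TT = m}

/-- The major index of a finite sequence in a linearly ordered set. -/
noncomputable def majSeq {n : ℕ} {α : Type*} [LinearOrder α] (w : Fin n → α) : ℕ :=
  ∑ i ∈ Finset.range n,
    if h : i + 1 < n then
      (if w ⟨i + 1, h⟩ < w ⟨i, Nat.lt_of_succ_lt h⟩ then i + 1 else 0)
    else 0

/-- The inversion number of a finite sequence in a linearly ordered set. -/
noncomputable def invSeq {n : ℕ} {α : Type*} [LinearOrder α] (w : Fin n → α) : ℕ :=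
  (univ.filter fun p : Fin n × Fin n => p.1 < p.2 ∧ w p.2 < w p.1).card

section Aux

variable {μ : List ℕ}

lemma sorted_get (hμ : μ.Pairwise (· ≥ ·)) {i j : Fin μ.length} (h : (i : ℕ) ≤ (j : ℕ)) :
    μ.get j ≤ μ.get i := by
  rcases eq_or_lt_of_le h with h' | h'
  · have : i = j := Fin.ext h'
    subst this; exact le_refl _
  · exact hμ.rel_get_of_lt (by exact h')

lemma cell_ext {c c' : Cell μ} (h1 : (c.1 : ℕ) = (c'.1 : ℕ)) (h2 : (c.2 : ℕ) = (c'.2 : ℕ)) :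
    c = c' := by
  obtain ⟨⟨i, hi⟩, ⟨j, hj⟩⟩ := c
  obtain ⟨⟨i', hi'⟩, ⟨j', hj'⟩⟩ := c'
  simp only [Fin.val_mk] at h1 h2
  subst h1; subst h2; rfl

/-- strict southeast step -/
lemma ssyt_lt {T : Cell μ → ℕ} (hT : IsSSYT T) {u u' : Cell μ}
    (hr : (u.1 : ℕ) < (u'.1 : ℕ)) (hc : (u.2 : ℕ) ≤ (u'.2 : ℕ)) : T u < T u' := by
  have hm : (u.2 : ℕ) < μ.get u'.1 := lt_of_le_of_lt hc u'.2.2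
  set m : Cell μ := ⟨u'.1, ⟨(u.2 : ℕ), hm⟩⟩ with hmdef
  have h1 : T u < T m := hT.2.2 u m hr rfl
  have h2 : T m ≤ T u' := hT.2.1 m u' rfl hc
  omega

lemma ssyt_le (hμ : μ.Pairwise (· ≥ ·)) {T : Cell μ → ℕ} (hT : IsSSYT T) {u u' : Cell μ}
    (hr : (u.1 : ℕ) ≤ (u'.1 : ℕ)) (hc : (u.2 : ℕ) ≤ (u'.2 : ℕ)) : T u ≤ T u' := by
  rcases eq_or_lt_of_le hr with h' | h'
  · have : u.1 = u'.1 := Fin.ext h'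
    rcases u with ⟨i, j⟩; rcases u' with ⟨i', j'⟩
    simp only at this
    subst this
    exact hT.2.1 _ _ rfl hc
  · have hm : (u'.2 : ℕ) < μ.get u.1 :=
      lt_of_lt_of_le u'.2.2 (sorted_get hμ (le_of_lt h'))
    set m : Cell μ := ⟨u.1, ⟨(u'.2 : ℕ), hm⟩⟩
    have h1 : T u ≤ T m := hT.2.1 u m rfl hc
    have h2 : T m < T u' := hT.2.2 m u' h' rfl
    omega

/-- same diagonal: value comparison is row comparison -/
lemma diag_lt_iff {T : Cell μ → ℕ} (hT : IsSSYT T) {u u' : Cell μ}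
    (hc : content u = content u') : T u < T u' ↔ (u.1 : ℕ) < (u'.1 : ℕ) := by
  unfold content at hc
  constructor
  · intro h
    by_contra hr
    push_neg at hr
    rcases eq_or_lt_of_le hr with h' | h'
    · have : u = u' := cell_ext h'.symm (by omega)
      subst this; omega
    · have : T u' < T u := ssyt_lt hT h' (by omega)
      omega
  · intro h
    exact ssyt_lt hT h (by omega)

/-- adjacent diagonals: `content u = content u' + 1` -/
lemma adj_lt_iff (hμ : μ.Pairwise (· ≥ ·)) {T : Cell μ → ℕ} (hT : IsSSYT T) {u u' : Cell μ}
    (hc : content u = content u' + 1) : T u < T u' ↔ (u.1 : ℕ) < (u'.1 : ℕ) := by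
  unfold content at hc
  constructor
  · intro h
    by_contra hr
    push_neg at hr
    have : T u' ≤ T u := ssyt_le hμ hT hr (by omega)
    omega
  · intro h
    exact ssyt_lt hT h (by omega)

end Aux
section Inj

variable {μ : List ℕ}

/-- Generic row-shift injection principle between finite sets of cells each of which is
determined by its row. -/
lemma card_le_of_rowmap (A B : Finset (Cell μ)) (g : ℕ → ℕ)
    (hginj : ∀ v ∈ A, ∀ v' ∈ A, g (v.1 : ℕ) = g (v'.1 : ℕ) → (v.1 : ℕ) = (v'.1 : ℕ))
    (hAdet : ∀ v ∈ A, ∀ v' ∈ A, (v.1 : ℕ) = (v'.1 : ℕ) → v = v')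
    (hBdet : ∀ u ∈ B, ∀ u' ∈ B, (u.1 : ℕ) = (u'.1 : ℕ) → u = u')
    (hmap : ∀ v ∈ A, ∃ u ∈ B, (u.1 : ℕ) = g (v.1 : ℕ)) : A.card ≤ B.card := by
  classical
  have hmap' : ∀ v : Cell μ, v ∈ A → ∃ u : Cell μ, u ∈ B ∧ (u.1 : ℕ) = g (v.1 : ℕ) := by
    intro v hv; obtain ⟨u, hu, hu2⟩ := hmap v hv; exact ⟨u, hu, hu2⟩
  choose! F hF1 hF2 using hmap'
  apply Finset.card_le_card_of_injOn F
  · intro v hv; exact hF1 v hv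
  · intro v₁ hv₁ v₂ hv₂ heq
    simp only [Finset.mem_coe] at hv₁ hv₂
    have h1 := hF2 v₁ hv₁
    have h2 := hF2 v₂ hv₂
    rw [heq] at h1
    have : (v₁.1 : ℕ) = (v₂.1 : ℕ) := hginj _ hv₁ _ hv₂ (by omega)
    exact hAdet v₁ hv₁ v₂ hv₂ this

/-- The "down" injection: from cells of content `content w + 1` with rows in `[ρ₀, row w)`
to cells of content `content w` with rows in `(ρ₀, row w]`. -/
lemma injDown (hμ : μ.Pairwise (· ≥ ·)) (w : Cell μ) (ρ₀ : ℕ) :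
    (univ.filter fun v : Cell μ =>
        content v = content w + 1 ∧ (ρ₀ ≤ (v.1 : ℕ) ∧ (v.1 : ℕ) < (w.1 : ℕ))).card ≤
    (univ.filter fun u : Cell μ =>
        content u = content w ∧ ((ρ₀ < (u.1 : ℕ) ∧ (u.1 : ℕ) ≤ (w.1 : ℕ)))).card := by
  apply card_le_of_rowmap _ _ (fun r => r + 1) (by intro v _ v' _ h; omega)
    (by
      intro v hv v' hv' hr
      simp only [Finset.mem_filter, Finset.mem_univ, true_and] at hv hv'
      unfold content at hv hv'
      exact cell_ext hr (by omega)) (by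
      intro v hv v' hv' hr
      simp only [Finset.mem_filter, Finset.mem_univ, true_and] at hv hv'
      unfold content at hv hv'
      exact cell_ext hr (by omega))
  intro v hv
  simp only [Finset.mem_filter, Finset.mem_univ, true_and] at hv
  obtain ⟨hcv, hρ, hrw⟩ := hv
  unfold content at hcv
  have h1 : (v.1 : ℕ) + 1 < μ.length := lt_of_le_of_lt hrw w.1.2
  have h2 : (v.2 : ℕ) < μ.get ⟨(v.1 : ℕ) + 1, h1⟩ := by
    have := sorted_get hμ (i := ⟨(v.1 : ℕ) + 1, h1⟩) (j := w.1) (by simpa using hrw)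
    have := w.2.2
    omega
  refine ⟨⟨⟨(v.1 : ℕ) + 1, h1⟩, ⟨(v.2 : ℕ), h2⟩⟩, ?_, rfl⟩
  simp only [Finset.mem_filter, Finset.mem_univ, true_and]
  unfold content
  refine ⟨by push_cast; omega, by omega, by omega⟩

/-- The "up" injection: from cells of content `content w` with rows in `(row w, ρ₁]`
to cells of content `content w + 1` with rows in `[row w, ρ₁)`. -/
lemma injUp (hμ : μ.Pairwise (· ≥ ·)) (w : Cell μ) (ρ₁ : ℕ) :
    (univ.filter fun u : Cell μ =>
        content u = content w ∧ ((w.1 : ℕ) < (u.1 : ℕ) ∧ (u.1 : ℕ) ≤ ρ₁)).card ≤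
    (univ.filter fun v : Cell μ =>
        content v = content w + 1 ∧ ((w.1 : ℕ) ≤ (v.1 : ℕ) ∧ (v.1 : ℕ) < ρ₁)).card := by
  apply card_le_of_rowmap _ _ (fun r => r - 1) (by
      intro v hv v' hv' h
      simp only [Finset.mem_filter, Finset.mem_univ, true_and] at hv hv'
      omega) (by
      intro v hv v' hv' hr
      simp only [Finset.mem_filter, Finset.mem_univ, true_and] at hv hv'
      unfold content at hv hv'
      exact cell_ext hr (by omega))
    (by
      intro v hv v' hv' hr
      simp only [Finset.mem_filter, Finset.mem_univ, true_and] at hv hv'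
      unfold content at hv hv'
      exact cell_ext hr (by omega))
  intro u hu
  simp only [Finset.mem_filter, Finset.mem_univ, true_and] at hu
  obtain ⟨hcu, hρ, hrw⟩ := hu
  unfold content at hcu
  have h0 : 1 ≤ (u.1 : ℕ) := by omega
  have h1 : (u.1 : ℕ) - 1 < μ.length := lt_of_le_of_lt (by omega) u.1.2
  have h2 : (u.2 : ℕ) < μ.get ⟨(u.1 : ℕ) - 1, h1⟩ := by
    have := sorted_get hμ (i := ⟨(u.1 : ℕ) - 1, h1⟩) (j := u.1)
      (by show (u.1 : ℕ) - 1 ≤ (u.1 : ℕ); omega)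
    have := u.2.2
    omega
  refine ⟨⟨⟨(u.1 : ℕ) - 1, h1⟩, ⟨(u.2 : ℕ), h2⟩⟩, ?_, rfl⟩
  simp only [Finset.mem_filter, Finset.mem_univ, true_and]
  unfold content
  refine ⟨by push_cast [h0]; omega, by omega, by omega⟩

end Inj
section CardHelpers

variable {α : Type*} [Fintype α]

lemma fcard_congr {p q : α → Prop} [DecidablePred p] [DecidablePred q] (h : ∀ u, p u ↔ q u) :
    (univ.filter p).card = (univ.filter q).card := by
  congr 1
  ext u
  simp only [Finset.mem_filter, Finset.mem_univ, true_and]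
  exact h u

lemma fcard_le {p q : α → Prop} [DecidablePred p] [DecidablePred q] (h : ∀ u, p u → q u) :
    (univ.filter p).card ≤ (univ.filter q).card := by
  apply Finset.card_le_card
  intro u hu
  simp only [Finset.mem_filter, Finset.mem_univ, true_and] at hu ⊢
  exact h u hu

lemma fcard_split (p q : α → Prop) [DecidablePred p] [DecidablePred q]
    [DecidablePred (fun u => p u ∧ q u)] [DecidablePred (fun u => p u ∧ ¬ q u)] :
    (univ.filter fun u => p u ∧ q u).card + (univ.filter fun u => p u ∧ ¬ q u).card
      = (univ.filter p).card := by
  have h1 : (univ.filter fun u => p u ∧ q u) = (univ.filter p).filter q := by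
    ext u; simp
  have h2 : (univ.filter fun u => p u ∧ ¬ q u) = (univ.filter p).filter (fun u => ¬ q u) := by
    ext u; simp
  rw [h1, h2, Finset.card_filter_add_card_filter_not]

end CardHelpers

section Key

variable {μ : List ℕ}

/-- The key per-cell inequality. -/
lemma key_ineq (hμ : μ.Pairwise (· ≥ ·)) {S T : Cell μ → ℕ} (hS : IsSSYT S) (hT : IsSSYT T)
    (w : Cell μ) :
    (univ.filter fun u : Cell μ => content u = content w ∧ (w.1 : ℕ) < (u.1 : ℕ)).card
      + (univ.filter fun v : Cell μ => content v = content w + 1 ∧ (v.1 : ℕ) < (w.1 : ℕ)).card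
    ≤ (univ.filter fun u : Cell μ => content u = content w ∧ T w < S u).card
      + (univ.filter fun v : Cell μ => content v = content w + 1 ∧ S v < T w).card := by
  by_cases hcase : ∀ u : Cell μ, content u = content w → T w < S u
  · -- all cells on the diagonal of `w` have `S`-value exceeding `T w`
    have e1 : (univ.filter fun u : Cell μ => content u = content w ∧ T w < S u).card
        = (univ.filter fun u : Cell μ => content u = content w).card :=
      fcard_congr fun u => ⟨fun h => h.1, fun h => ⟨h, hcase u h⟩⟩
    have e2 := fcard_split (fun u : Cell μ => content u = content w)
      (fun u => (w.1 : ℕ) < (u.1 : ℕ))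
    have e3 : (univ.filter fun v : Cell μ =>
          content v = content w + 1 ∧ (v.1 : ℕ) < (w.1 : ℕ)).card
        ≤ (univ.filter fun u : Cell μ =>
          content u = content w ∧ ¬ (w.1 : ℕ) < (u.1 : ℕ)).card := by
      calc (univ.filter fun v : Cell μ =>
              content v = content w + 1 ∧ (v.1 : ℕ) < (w.1 : ℕ)).card
          = (univ.filter fun v : Cell μ =>
              content v = content w + 1 ∧ (0 ≤ (v.1 : ℕ) ∧ (v.1 : ℕ) < (w.1 : ℕ))).card :=
            fcard_congr fun v => by constructor <;> (intro h; exact ⟨h.1, by omega⟩)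
        _ ≤ (univ.filter fun u : Cell μ =>
              content u = content w ∧ (0 < (u.1 : ℕ) ∧ (u.1 : ℕ) ≤ (w.1 : ℕ))).card :=
            injDown hμ w 0
        _ ≤ _ := fcard_le fun u h => ⟨h.1, by omega⟩
    omega
  · push_neg at hcase
    obtain ⟨u0, hu0c, hu0le⟩ := hcase
    have hne : (univ.filter fun u : Cell μ => content u = content w ∧ S u ≤ T w).Nonempty :=
      ⟨u0, by simp only [Finset.mem_filter, Finset.mem_univ, true_and]; exact ⟨hu0c, hu0le⟩⟩
    obtain ⟨U, hUmem, hUmax⟩ := Finset.exists_max_image _ (fun u : Cell μ => (u.1 : ℕ)) hne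
    simp only [Finset.mem_filter, Finset.mem_univ, true_and] at hUmem
    obtain ⟨hUc, hUle⟩ := hUmem
    have hUmax' : ∀ u : Cell μ, content u = content w → S u ≤ T w → (u.1 : ℕ) ≤ (U.1 : ℕ) := by
      intro u h1 h2
      exact hUmax u (by simp only [Finset.mem_filter, Finset.mem_univ, true_and]; exact ⟨h1, h2⟩)
    have hA : (univ.filter fun u : Cell μ =>
          content u = content w ∧ (U.1 : ℕ) < (u.1 : ℕ)).card
        ≤ (univ.filter fun u : Cell μ => content u = content w ∧ T w < S u).card := by
      apply fcard_le
      intro u ⟨h1, h2⟩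
      refine ⟨h1, ?_⟩
      by_contra h3
      have := hUmax' u h1 (by omega)
      omega
    have hB : (univ.filter fun v : Cell μ =>
          content v = content w + 1 ∧ (v.1 : ℕ) < (U.1 : ℕ)).card
        ≤ (univ.filter fun v : Cell μ => content v = content w + 1 ∧ S v < T w).card := by
      apply fcard_le
      intro v ⟨h1, h2⟩
      refine ⟨h1, ?_⟩
      have hlt : S v < S U := by
        rw [adj_lt_iff hμ hS (by rw [h1, hUc])]
        exact h2
      omega
    rcases le_or_gt (w.1 : ℕ) (U.1 : ℕ) with hcw | hcw
    · -- row U ≥ row w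
      have s1 : (univ.filter fun u : Cell μ =>
            content u = content w ∧ ((w.1 : ℕ) < (u.1 : ℕ) ∧ (u.1 : ℕ) ≤ (U.1 : ℕ))).card
          + (univ.filter fun u : Cell μ =>
            content u = content w ∧ ¬ ((w.1 : ℕ) < (u.1 : ℕ) ∧ (u.1 : ℕ) ≤ (U.1 : ℕ))).card
          = (univ.filter fun u : Cell μ => content u = content w).card :=
        fcard_split _ _
      -- rewrite the complement pieces
      have s2 : (univ.filter fun u : Cell μ => content u = content w ∧ (w.1 : ℕ) < (u.1 : ℕ)).card
          = (univ.filter fun u : Cell μ =>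
              content u = content w ∧ ((w.1 : ℕ) < (u.1 : ℕ) ∧ (u.1 : ℕ) ≤ (U.1 : ℕ))).card
          + (univ.filter fun u : Cell μ =>
              content u = content w ∧ (U.1 : ℕ) < (u.1 : ℕ)).card := by
        rw [← fcard_split (fun u : Cell μ => content u = content w ∧ (w.1 : ℕ) < (u.1 : ℕ))
          (fun u => (u.1 : ℕ) ≤ (U.1 : ℕ))]
        congr 1
        · exact fcard_congr fun u => by
            constructor
            · rintro ⟨⟨h1, h2⟩, h3⟩; exact ⟨h1, h2, h3⟩
            · rintro ⟨h1, h2, h3⟩; exact ⟨⟨h1, h2⟩, h3⟩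
        · exact fcard_congr fun u => by
            constructor
            · rintro ⟨⟨h1, _⟩, h3⟩; exact ⟨h1, by omega⟩
            · rintro ⟨h1, h2⟩; exact ⟨⟨h1, by omega⟩, by omega⟩
      have s3 : (univ.filter fun v : Cell μ =>
            content v = content w + 1 ∧ (v.1 : ℕ) < (U.1 : ℕ)).card
          = (univ.filter fun v : Cell μ =>
              content v = content w + 1 ∧ (v.1 : ℕ) < (w.1 : ℕ)).card
          + (univ.filter fun v : Cell μ =>
              content v = content w + 1 ∧ ((w.1 : ℕ) ≤ (v.1 : ℕ) ∧ (v.1 : ℕ) < (U.1 : ℕ))).card := by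
        rw [← fcard_split (fun v : Cell μ => content v = content w + 1 ∧ (v.1 : ℕ) < (U.1 : ℕ))
          (fun v => (v.1 : ℕ) < (w.1 : ℕ))]
        congr 1
        · exact fcard_congr fun v => by
            constructor
            · rintro ⟨⟨h1, _⟩, h3⟩; exact ⟨h1, h3⟩
            · rintro ⟨h1, h2⟩; exact ⟨⟨h1, by omega⟩, h2⟩
        · exact fcard_congr fun v => by
            constructor
            · rintro ⟨⟨h1, h2⟩, h3⟩; exact ⟨h1, by omega⟩
            · rintro ⟨h1, h2⟩; exact ⟨⟨h1, by omega⟩, by omega⟩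
      have s4 := injUp hμ w (U.1 : ℕ)
      omega
    · -- row U < row w
      have s2 : (univ.filter fun u : Cell μ =>
            content u = content w ∧ (U.1 : ℕ) < (u.1 : ℕ)).card
          = (univ.filter fun u : Cell μ =>
              content u = content w ∧ (w.1 : ℕ) < (u.1 : ℕ)).card
          + (univ.filter fun u : Cell μ =>
              content u = content w ∧ ((U.1 : ℕ) < (u.1 : ℕ) ∧ (u.1 : ℕ) ≤ (w.1 : ℕ))).card := by
        rw [← fcard_split (fun u : Cell μ => content u = content w ∧ (U.1 : ℕ) < (u.1 : ℕ))
          (fun u => (w.1 : ℕ) < (u.1 : ℕ))]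
        congr 1
        · exact fcard_congr fun u => by
            constructor
            · rintro ⟨⟨h1, _⟩, h3⟩; exact ⟨h1, h3⟩
            · rintro ⟨h1, h2⟩; exact ⟨⟨h1, by omega⟩, h2⟩
        · exact fcard_congr fun u => by
            constructor
            · rintro ⟨⟨h1, h2⟩, h3⟩; exact ⟨h1, by omega⟩
            · rintro ⟨h1, h2⟩; exact ⟨⟨h1, by omega⟩, by omega⟩
      have s3 : (univ.filter fun v : Cell μ =>
            content v = content w + 1 ∧ (v.1 : ℕ) < (w.1 : ℕ)).card
          = (univ.filter fun v : Cell μ =>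
              content v = content w + 1 ∧ (v.1 : ℕ) < (U.1 : ℕ)).card
          + (univ.filter fun v : Cell μ =>
              content v = content w + 1 ∧ ((U.1 : ℕ) ≤ (v.1 : ℕ) ∧ (v.1 : ℕ) < (w.1 : ℕ))).card := by
        rw [← fcard_split (fun v : Cell μ => content v = content w + 1 ∧ (v.1 : ℕ) < (w.1 : ℕ))
          (fun v => (v.1 : ℕ) < (U.1 : ℕ))]
        congr 1
        · exact fcard_congr fun v => by
            constructor
            · rintro ⟨⟨h1, _⟩, h3⟩; exact ⟨h1, h3⟩
            · rintro ⟨h1, h2⟩; exact ⟨⟨h1, by omega⟩, h2⟩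
        · exact fcard_congr fun v => by
            constructor
            · rintro ⟨⟨h1, h2⟩, h3⟩; exact ⟨h1, by omega⟩
            · rintro ⟨h1, h2⟩; exact ⟨⟨h1, by omega⟩, by omega⟩
      have s4 := injDown hμ w (U.1 : ℕ)
      omega

end Key
section Counting

variable {μ : List ℕ}

/-- inversions of the first kind between two tableaux (first has smaller tuple index) -/
noncomputable def cA (S T : Cell μ → ℕ) : ℕ :=
  (univ.filter fun p : Cell μ × Cell μ => T p.2 < S p.1 ∧ content p.1 = content p.2).card

/-- inversions of the second kind (first tableau has the *larger* tuple index) -/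
noncomputable def cB (S T : Cell μ → ℕ) : ℕ :=
  (univ.filter fun p : Cell μ × Cell μ => T p.2 < S p.1 ∧ content p.1 = content p.2 - 1).card

/-- total inversions between an ordered pair of tableaux -/
noncomputable def FF (S T : Cell μ → ℕ) : ℕ := cA S T + cB T S

/-- the shape constant: value of `FF T T` for every SSYT `T` -/
noncomputable def ee (μ : List ℕ) : ℕ :=
  (univ.filter fun p : Cell μ × Cell μ =>
      (p.2.1 : ℕ) < (p.1.1 : ℕ) ∧ content p.1 = content p.2).card +
  (univ.filter fun p : Cell μ × Cell μ =>
      (p.2.1 : ℕ) < (p.1.1 : ℕ) ∧ content p.1 = content p.2 - 1).card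

lemma FF_self (hμ : μ.Pairwise (· ≥ ·)) {T : Cell μ → ℕ} (hT : IsSSYT T) : FF T T = ee μ := by
  unfold FF cA cB ee
  congr 1
  · apply fcard_congr
    intro p
    constructor
    · rintro ⟨h1, h2⟩
      exact ⟨by rwa [diag_lt_iff hT h2.symm] at h1, h2⟩
    · rintro ⟨h1, h2⟩
      exact ⟨by rwa [diag_lt_iff hT h2.symm], h2⟩
  · apply fcard_congr
    intro p
    constructor
    · rintro ⟨h1, h2⟩
      have h2' : content p.2 = content p.1 + 1 := by omega
      exact ⟨by rwa [adj_lt_iff hμ hT h2'] at h1, h2⟩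
    · rintro ⟨h1, h2⟩
      have h2' : content p.2 = content p.1 + 1 := by omega
      exact ⟨by rwa [adj_lt_iff hμ hT h2'], h2⟩

/-- decompose a product-set cardinality over the second coordinate -/
lemma card_prod_snd {α : Type*} [Fintype α] (q : α → α → Prop)
    [DecidablePred (fun p : α × α => q p.1 p.2)] [∀ w, DecidablePred (fun u => q u w)] :
    (univ.filter fun p : α × α => q p.1 p.2).card
      = ∑ w : α, (univ.filter fun u : α => q u w).card := by
  classical
  rw [Finset.card_filter, Fintype.sum_prod_type, Finset.sum_comm]
  congr 1
  ext w
  rw [Finset.card_filter]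

/-- decompose a product-set cardinality over the first coordinate -/
lemma card_prod_fst {α : Type*} [Fintype α] (q : α → α → Prop)
    [DecidablePred (fun p : α × α => q p.1 p.2)] [∀ w, DecidablePred (fun v => q w v)] :
    (univ.filter fun p : α × α => q p.1 p.2).card
      = ∑ w : α, (univ.filter fun v : α => q w v).card := by
  classical
  rw [Finset.card_filter, Fintype.sum_prod_type]
  congr 1
  ext w
  rw [Finset.card_filter]

lemma FF_ge (hμ : μ.Pairwise (· ≥ ·)) {S T : Cell μ → ℕ} (hS : IsSSYT S) (hT : IsSSYT T) :
    ee μ ≤ FF S T := by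
  unfold FF cA cB ee
  rw [card_prod_snd (fun u w => T w < S u ∧ content u = content w),
    card_prod_snd (fun u w => (w.1 : ℕ) < (u.1 : ℕ) ∧ content u = content w),
    card_prod_fst (fun w v => S v < T w ∧ content w = content v - 1),
    card_prod_fst (fun w v => (v.1 : ℕ) < (w.1 : ℕ) ∧ content w = content v - 1)]
  rw [← Finset.sum_add_distrib, ← Finset.sum_add_distrib]
  apply Finset.sum_le_sum
  intro w _
  have h1 : (univ.filter fun u : Cell μ => T w < S u ∧ content u = content w).card
      = (univ.filter fun u : Cell μ => content u = content w ∧ T w < S u).card :=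
    fcard_congr fun u => and_comm
  have h2 : (univ.filter fun v : Cell μ => S v < T w ∧ content w = content v - 1).card
      = (univ.filter fun v : Cell μ => content v = content w + 1 ∧ S v < T w).card :=
    fcard_congr fun v => by constructor <;> (rintro ⟨a, b⟩; exact ⟨by omega, by omega⟩)
  have h3 : (univ.filter fun u : Cell μ => (w.1 : ℕ) < (u.1 : ℕ) ∧ content u = content w).card
      = (univ.filter fun u : Cell μ => content u = content w ∧ (w.1 : ℕ) < (u.1 : ℕ)).card :=
    fcard_congr fun u => and_comm
  have h4 : (univ.filter fun v : Cell μ => (v.1 : ℕ) < (w.1 : ℕ) ∧ content w = content v - 1).card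
      = (univ.filter fun v : Cell μ => content v = content w + 1 ∧ (v.1 : ℕ) < (w.1 : ℕ)).card :=
    fcard_congr fun v => by constructor <;> (rintro ⟨a, b⟩; exact ⟨by omega, by omega⟩)
  rw [h1, h2, h3, h4]
  exact key_ineq hμ hS hT w

end Counting
section InvTEq

variable {μ : List ℕ} {n : ℕ}

/-- inversions attached to an ordered pair of indices -/
noncomputable def cnt (TT : Fin n → Cell μ → ℕ) (i j : Fin n) : ℕ :=
  (univ.filter fun q : Cell μ × Cell μ =>
      TT j q.2 < TT i q.1 ∧
      ((i < j ∧ content q.1 = content q.2) ∨ (j < i ∧ content q.1 = content q.2 - 1))).card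

lemma invT_eq_sum_cnt (TT : Fin n → Cell μ → ℕ) :
    InvT TT = ∑ i : Fin n, ∑ j : Fin n, cnt TT i j := by
  unfold InvT cnt
  rw [Finset.card_filter, Fintype.sum_prod_type]
  have step : ∀ x : Fin n × Cell μ,
      (∑ y : Fin n × Cell μ, if TT y.1 y.2 < TT x.1 x.2 ∧
          ((x.1 < y.1 ∧ content x.2 = content y.2) ∨
           (y.1 < x.1 ∧ content x.2 = content y.2 - 1)) then 1 else 0)
        = ∑ j : Fin n, ∑ v : Cell μ, if TT j v < TT x.1 x.2 ∧
          ((x.1 < j ∧ content x.2 = content v) ∨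
           (j < x.1 ∧ content x.2 = content v - 1)) then 1 else 0 := by
    intro x
    rw [Fintype.sum_prod_type]
  simp only [step]
  rw [Fintype.sum_prod_type]
  congr 1
  ext i
  rw [Finset.sum_comm]
  congr 1
  ext j
  rw [Finset.card_filter, Fintype.sum_prod_type]

lemma cnt_lt {TT : Fin n → Cell μ → ℕ} {i j : Fin n} (h : i < j) :
    cnt TT i j = cA (TT i) (TT j) := by
  unfold cnt cA
  apply fcard_congr
  intro q
  constructor
  · rintro ⟨h1, h2 | h2⟩
    · exact ⟨h1, h2.2⟩
    · exact absurd h (not_lt_of_gt h2.1)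
  · rintro ⟨h1, h2⟩
    exact ⟨h1, Or.inl ⟨h, h2⟩⟩

lemma cnt_gt {TT : Fin n → Cell μ → ℕ} {i j : Fin n} (h : j < i) :
    cnt TT i j = cB (TT i) (TT j) := by
  unfold cnt cB
  apply fcard_congr
  intro q
  constructor
  · rintro ⟨h1, h2 | h2⟩
    · exact absurd h (not_lt_of_gt h2.1)
    · exact ⟨h1, h2.2⟩
  · rintro ⟨h1, h2⟩
    exact ⟨h1, Or.inr ⟨h, h2⟩⟩

lemma cnt_self (TT : Fin n → Cell μ → ℕ) (i : Fin n) : cnt TT i i = 0 := by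
  unfold cnt
  rw [Finset.card_eq_zero, Finset.filter_eq_empty_iff]
  intro q _
  rintro ⟨-, h | h⟩ <;> exact lt_irrefl i h.1

set_option maxHeartbeats 2000000 in
lemma invT_eq (TT : Fin n → Cell μ → ℕ) :
    InvT TT = ∑ p ∈ (univ.filter fun p : Fin n × Fin n => p.1 < p.2),
      FF (TT p.1) (TT p.2) := by
  classical
  have e0 : ∑ i : Fin n, ∑ j : Fin n, cnt TT i j
      = ∑ p : Fin n × Fin n, cnt TT p.1 p.2 := (Fintype.sum_prod_type (fun p : Fin n × Fin n => cnt TT p.1 p.2)).symm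
  rw [invT_eq_sum_cnt, e0]
  rw [← Finset.sum_filter_add_sum_filter_not (univ : Finset (Fin n × Fin n))
    (fun p => p.1 < p.2) (fun p => cnt TT p.1 p.2)]
  have h2 : ∑ p ∈ (univ.filter fun p : Fin n × Fin n => ¬ p.1 < p.2), cnt TT p.1 p.2
      = ∑ p ∈ (univ.filter fun p : Fin n × Fin n => p.2 < p.1), cnt TT p.1 p.2 := by
    symm
    apply Finset.sum_subset
    · intro p hp
      simp only [Finset.mem_filter, Finset.mem_univ, true_and] at hp ⊢
      exact not_lt_of_gt hp
    · intro p hp hnp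
      simp only [Finset.mem_filter, Finset.mem_univ, true_and] at hp hnp
      have : p.1 = p.2 := le_antisymm (not_lt.mp hnp) (not_lt.mp hp)
      rw [show cnt TT p.1 p.2 = cnt TT p.1 p.1 by rw [this], cnt_self]
  have h3 : ∑ p ∈ (univ.filter fun p : Fin n × Fin n => p.2 < p.1), cnt TT p.1 p.2
      = ∑ p ∈ (univ.filter fun p : Fin n × Fin n => p.1 < p.2), cnt TT p.2 p.1 := by
    apply Finset.sum_nbij' (fun p => Prod.swap p) (fun p => Prod.swap p) <;>
      simp [Finset.mem_filter]
  rw [h2, h3, ← Finset.sum_add_distrib]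
  apply Finset.sum_congr rfl
  intro p hp
  simp only [Finset.mem_filter, Finset.mem_univ, true_and] at hp
  rw [cnt_lt hp, cnt_gt hp]
  rfl

end InvTEq
section DMin

variable {μ : List ℕ}

/-- the minimal tableau: entry = row + 1 -/
def T0 (μ : List ℕ) : Cell μ → ℕ := fun c => (c.1 : ℕ) + 1

lemma T0_ssyt : IsSSYT (T0 μ) := by
  refine ⟨fun c => by simp [T0], fun c c' h _ => ?_, fun c c' h _ => ?_⟩
  · unfold T0
    omega
  · unfold T0
    omega

lemma dMin_eq (hμ : μ.Pairwise (· ≥ ·)) (n : ℕ) :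
    dMin μ n = (univ.filter fun p : Fin n × Fin n => p.1 < p.2).card * ee μ := by
  have hlow : ∀ TT : Fin n → Cell μ → ℕ, (∀ a, IsSSYT (TT a)) →
      (univ.filter fun p : Fin n × Fin n => p.1 < p.2).card * ee μ ≤ InvT TT := by
    intro TT hTT
    rw [invT_eq, Finset.card_eq_sum_ones, Finset.sum_mul, one_mul]
    exact Finset.sum_le_sum fun p _ => FF_ge hμ (hTT p.1) (hTT p.2)
  have hwit : InvT (fun _ : Fin n => T0 μ)
      = (univ.filter fun p : Fin n × Fin n => p.1 < p.2).card * ee μ := by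
    rw [invT_eq, Finset.card_eq_sum_ones, Finset.sum_mul, one_mul]
    exact Finset.sum_congr rfl fun p _ => FF_self hμ T0_ssyt
  have hmem : (univ.filter fun p : Fin n × Fin n => p.1 < p.2).card * ee μ ∈
      {m | ∃ TT : Fin n → Cell μ → ℕ, (∀ a, IsSSYT (TT a)) ∧ InvT TT = m} :=
    ⟨fun _ => T0 μ, fun _ => T0_ssyt, hwit⟩
  apply le_antisymm
  · exact Nat.sInf_le hmem
  · apply le_csInf ⟨_, hmem⟩
    rintro m ⟨TT, h1, rfl⟩
    exact hlow TT h1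

end DMin
section ReadWord

lemma flatMap_range_inj {α : Type*} (g g' : ℕ → List α)
    (hlen : ∀ i, (g i).length = (g' i).length) :
    ∀ m : ℕ, (List.range m).flatMap g = (List.range m).flatMap g' →
      ∀ i < m, g i = g' i := by
  intro m
  induction m with
  | zero => intro _ i hi; omega
  | succ m ih =>
    intro h i hi
    rw [List.range_succ, List.flatMap_append, List.flatMap_append] at h
    have hl : ((List.range m).flatMap g).length = ((List.range m).flatMap g').length := by
      rw [List.length_flatMap, List.length_flatMap]
      congr 1
      apply List.map_congr_left
      intro a _
      exact hlen a
    obtain ⟨h1, h2⟩ := List.append_inj h hl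
    rcases Nat.lt_or_ge i m with h' | h'
    · exact ih h1 i h'
    · have : i = m := by omega
      subst this
      simpa using h2
end ReadWord

section ReadWordInj

variable {μ : List ℕ}

lemma readWord_inj {T T' : Cell μ → ℕ} (h : readWord T = readWord T') : T = T' := by
  unfold readWord at h
  have hrows := flatMap_range_inj _ _ (fun i => by simp) _ h
  funext c
  obtain ⟨⟨i, hi⟩, ⟨j, hj⟩⟩ := c
  have hrow := hrows i hi
  have hj' : j < μ.getD i 0 := by
    rwa [List.getD_eq_getElem μ 0 hi]
  have hj'' : j < (μ[i]?.getD 0) := by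
    simpa [List.getD_eq_getElem?_getD] using hj'
  have := congrArg (fun l => l.getD j 0) hrow
  simp only [List.getD_eq_getElem?_getD, List.getElem?_map] at this
  rw [List.getElem?_range hj''] at this
  simp only [Option.map_some, Option.getD_some] at this
  simp only [dif_pos hi, dif_pos hj] at this
  exact this

end ReadWordInj

/-- For a weakly increasing `n`-tuple `T₀ ≤ ⋯ ≤ T_{n-1}` of semistandard tableaux of shape
`μ` (ordered lexicographically by reading words), `Inv(T₀,…,T_{n-1}) - d_𝛍` lies in the
subgroup of `ℤ` generated by the multiplicities `ρ₁, ρ₂, …` of the distinct tableaux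
appearing, where `d_𝛍` is the minimal inversion number. -/
theorem stmt11 (μ : List ℕ) (hμ : μ.Pairwise (· ≥ ·)) (n : ℕ)
    (TT : Fin n → Cell μ → ℕ) (hssyt : ∀ a, IsSSYT (TT a))
    (hmono : ∀ a b : Fin n, a ≤ b → readWord (TT a) ≤ readWord (TT b)) :
    ∃ b : (Cell μ → ℕ) → ℤ,
      (InvT TT : ℤ) - (dMin μ n : ℤ)
        = ∑ t ∈ Finset.univ.image TT,
            b t * ((Finset.univ.filter fun a : Fin n => TT a = t).card : ℤ) := by
  classical
  have hinterval : ∀ i k j : Fin n, i ≤ k → k ≤ j → TT i = TT j → TT k = TT i := by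
    intro i k j h1 h2 h3
    have r1 := hmono i k h1
    have r2 := hmono k j h2
    rw [← h3] at r2
    exact readWord_inj (le_antisymm r2 r1)
  set g : Fin n → Fin n → ℤ := fun i j => (FF (TT i) (TT j) : ℤ) - (ee μ : ℤ) with hg
  set b : (Cell μ → ℕ) → ℤ := fun t =>
    ∑ i ∈ univ.filter (fun i : Fin n => ∀ k : Fin n, k ≤ i → TT k ≠ t),
      ((FF (TT i) t : ℤ) - (ee μ : ℤ)) with hb
  refine ⟨b, ?_⟩
  have hL : (InvT TT : ℤ) - (dMin μ n : ℤ)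
      = ∑ p ∈ (univ.filter fun p : Fin n × Fin n => p.1 < p.2), g p.1 p.2 := by
    rw [invT_eq, dMin_eq hμ n, hg]
    rw [Finset.sum_sub_distrib, Finset.sum_const, nsmul_eq_mul]
    push_cast
    ring
  have hA : ∑ p ∈ (univ.filter fun p : Fin n × Fin n => p.1 < p.2), g p.1 p.2
      = ∑ j : Fin n, ∑ i ∈ univ.filter (· < j), g i j := by
    rw [Finset.sum_filter]
    have e0 : ∑ p : Fin n × Fin n, (if p.1 < p.2 then g p.1 p.2 else 0)
        = ∑ i : Fin n, ∑ j : Fin n, (if i < j then g i j else 0) :=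
      Fintype.sum_prod_type (fun p : Fin n × Fin n => if p.1 < p.2 then g p.1 p.2 else 0)
    rw [e0, Finset.sum_comm]
    apply Finset.sum_congr rfl
    intro j _
    rw [Finset.sum_filter]
  have hB : ∑ j : Fin n, (∑ i ∈ univ.filter (· < j), g i j)
      = ∑ t ∈ univ.image TT, ∑ j ∈ univ.filter (fun j => TT j = t),
          ∑ i ∈ univ.filter (· < j), g i j := by
    rw [Finset.sum_fiberwise_eq_sum_filter univ (univ.image TT) TT
      (fun j => ∑ i ∈ univ.filter (· < j), g i j)]
    apply Finset.sum_congr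
    · ext j
      simp [Finset.mem_image]
    · intros; rfl
  have hC : ∀ t ∈ univ.image TT, ∀ j ∈ univ.filter (fun j => TT j = t),
      (∑ i ∈ univ.filter (· < j), g i j) = b t := by
    intro t _ j hj
    simp only [Finset.mem_filter, Finset.mem_univ, true_and] at hj
    have hgj : ∀ i : Fin n, g i j = (FF (TT i) t : ℤ) - (ee μ : ℤ) := by
      intro i; simp only [hg]; rw [hj]
    rw [hb]
    have step1 : (∑ i ∈ univ.filter (· < j), g i j)
        = ∑ i ∈ (univ.filter (· < j)).filter (fun i => TT i ≠ t), g i j := by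
      symm
      rw [Finset.filter_filter]
      rw [show (univ.filter fun i : Fin n => i < j ∧ TT i ≠ t)
          = (univ.filter (· < j)).filter (fun i => TT i ≠ t) by
        rw [Finset.filter_filter]]
      apply Finset.sum_filter_of_ne
      intro i hi hgne
      simp only [Finset.mem_filter, Finset.mem_univ, true_and] at hi
      intro hit
      apply hgne
      rw [hgj i, hit, ← hj]
      have : FF (TT j) (TT j) = ee μ := FF_self hμ (hssyt j)
      rw [show FF (TT j) (TT j) = ee μ from this]
      ring
    have step2 : (univ.filter (· < j)).filter (fun i => TT i ≠ t)
        = univ.filter (fun i : Fin n => ∀ k : Fin n, k ≤ i → TT k ≠ t) := by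
      ext i
      simp only [Finset.mem_filter, Finset.mem_univ, true_and]
      constructor
      · rintro ⟨h1, h2⟩ k hk hkt
        apply h2
        have : TT k = TT j := by rw [hkt, hj]
        have := hinterval k i j hk (le_of_lt h1) this
        rw [this, hkt]
      · intro h
        have hij : i < j := by
          by_contra hc
          exact h j (not_lt.mp hc) hj
        exact ⟨hij, h i le_rfl⟩
    rw [step1, step2]
    apply Finset.sum_congr rfl
    intro i _
    exact hgj i
  rw [hL, hA, hB]
  rw [Finset.sum_congr rfl (fun t ht => Finset.sum_congr rfl (hC t ht))]
  apply Finset.sum_congr rfl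
  intro t _
  rw [Finset.sum_const, nsmul_eq_mul, mul_comm]
end

section
/- Let w be a word over a totally ordered alphabet, and let (P, Q) be the pair of tableaux produced by the Robinson–Schensted algorithm applied to w. Then maj(w) = maj(Q), where maj(w) is the sum of positions i with w_i > w_{i+1} and maj(Q) is the sum of descents of the standard tableau Q. -/
open Finset

/-- Schensted row insertion of a letter `x` into a tableau given as a list of rows:
`x` is appended to the first row if every entry there is `≤ x`; otherwise it replaces the
leftmost entry `> x`, which is bumped into the next row, and so on. -/
def rowInsert : List (List ℕ) → ℕ → List (List ℕ)
  | [], x => [[x]]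
  | r :: rest, x =>
    if ∀ y ∈ r, y ≤ x then (r ++ [x]) :: rest
    else
      let idx := r.findIdx fun y => x < y
      r.set idx x :: rowInsert rest (r.getD idx 0)

/-- Append the label `x` to row `r` of the recording tableau `Q` (creating a new row if
necessary). -/
def addAt (Q : List (List ℕ)) (r x : ℕ) : List (List ℕ) :=
  if h : r < Q.length then Q.set r (Q.get ⟨r, h⟩ ++ [x]) else Q ++ [[x]]

/-- The Robinson–Schensted correspondence: inserting the letters of `w` one by one produces
the insertion tableau `P`; the recording tableau `Q` records in which row a new cell is
created at each step. -/
def RS (w : List ℕ) : List (List ℕ) × List (List ℕ) :=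
  (w.zipIdx.map Prod.swap).foldl
    (fun PQ p =>
      let P' := rowInsert PQ.1 p.2
      let r := ((List.range P'.length).find? fun i =>
          (PQ.1.map List.length).getD i 0 ≠ (P'.map List.length).getD i 0).getD 0
      (P', addAt PQ.2 r (p.1 + 1)))
    ([], [])

/-- The row (0-based) of the recording tableau containing the entry `k`. -/
def rowOf (Q : List (List ℕ)) (k : ℕ) : ℕ := Q.findIdx fun r => k ∈ r

/-- The major index of a standard tableau `Q` with entries `1, …, n`: the sum of the
descents of `Q`, i.e. of the entries `i` such that `i + 1` lies in a strictly lower row. -/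
def majQ (Q : List (List ℕ)) (n : ℕ) : ℕ :=
  ∑ i ∈ Finset.Icc 1 (n - 1), if rowOf Q i < rowOf Q (i + 1) then i else 0

/-- the row where insertion of `x` creates a new cell -/
def irow : List (List ℕ) → ℕ → ℕ
  | [], _ => 0
  | r :: rest, x =>
    if ∀ y ∈ r, y ≤ x then 0
    else irow rest (r.getD (r.findIdx fun y => x < y) 0) + 1

section bump
variable {r : List ℕ} {x : ℕ}

lemma bump_lt (h : ¬ ∀ y ∈ r, y ≤ x) : r.findIdx (fun y => x < y) < r.length := by
  apply List.findIdx_lt_length_of_exists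
  push_neg at h
  obtain ⟨y, hy, hxy⟩ := h
  exact ⟨y, hy, by simpa using hxy⟩

lemma bump_gt (h : ¬ ∀ y ∈ r, y ≤ x) : x < r.getD (r.findIdx fun y => x < y) 0 := by
  rw [List.getD_eq_getElem _ _ (bump_lt h)]
  have := List.findIdx_getElem (p := fun y => x < y) (xs := r) (w := bump_lt h)
  simpa using this

lemma bump_before (hj : j < r.findIdx (fun y => x < y)) (hj' : j < r.length) :
    r[j] ≤ x := by
  have := List.not_of_lt_findIdx hj
  simpa using this

end bump

lemma irow_le (P : List (List ℕ)) (x : ℕ) : irow P x ≤ P.length := by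
  induction P generalizing x with
  | nil => simp [irow]
  | cons r rest ih =>
    rw [irow]
    split
    · simp
    · simpa using ih _

lemma rowInsert_length (P : List (List ℕ)) (x : ℕ) :
    (rowInsert P x).length = max P.length (irow P x + 1) := by
  induction P generalizing x with
  | nil => simp [rowInsert, irow]
  | cons r rest ih =>
    rw [rowInsert, irow]
    split
    · simp only [List.length_cons]; omega
    · simp only [List.length_cons, ih]
      omega

lemma lenD_eq (P : List (List ℕ)) (x : ℕ) {i : ℕ} (hi : i ≠ irow P x) :
    ((rowInsert P x).map List.length).getD i 0 = (P.map List.length).getD i 0 := by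
  induction P generalizing x i with
  | nil =>
    rw [rowInsert]
    simp only [irow] at hi
    cases i with
    | zero => exact absurd rfl hi
    | succ n => simp
  | cons r rest ih =>
    rw [rowInsert]
    rw [irow] at hi
    by_cases hc : ∀ y ∈ r, y ≤ x
    · rw [if_pos hc] at hi ⊢
      cases i with
      | zero => exact absurd rfl hi
      | succ n => simp
    · rw [if_neg hc] at hi ⊢
      cases i with
      | zero => simp
      | succ n =>
        simp only [List.map_cons, List.getD_cons_succ]
        exact ih _ (by omega)

lemma lenD_irow (P : List (List ℕ)) (x : ℕ) :
    ((rowInsert P x).map List.length).getD (irow P x) 0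
      = (P.map List.length).getD (irow P x) 0 + 1 := by
  induction P generalizing x with
  | nil => simp [rowInsert, irow]
  | cons r rest ih =>
    rw [rowInsert, irow]
    split
    · simp
    · simp only [List.map_cons, List.getD_cons_succ]
      exact ih _

lemma mem_set_self {r : List ℕ} {i x : ℕ} (hi : i < r.length) : x ∈ r.set i x := by
  have h1 : i < (r.set i x).length := by simpa using hi
  have : (r.set i x)[i] = x := by rw [List.getElem_set]; simp
  have h2 := List.getElem_mem h1
  rwa [this] at h2

lemma rowInsert_sorted {P : List (List ℕ)} {x : ℕ}
    (h : ∀ r ∈ P, List.Pairwise (· ≤ ·) r) :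
    ∀ r ∈ rowInsert P x, List.Pairwise (· ≤ ·) r := by
  induction P generalizing x with
  | nil =>
    intro r hr
    rw [rowInsert] at hr
    simp at hr
    simp [hr]
  | cons r rest ih =>
    intro s hs
    rw [rowInsert] at hs
    by_cases hc : ∀ y ∈ r, y ≤ x
    · rw [if_pos hc] at hs
      rcases List.mem_cons.1 hs with h1 | h1
      · subst h1
        rw [List.pairwise_append]
        refine ⟨h r (by simp), by simp, ?_⟩
        intro a ha b hb
        simp at hb
        subst hb
        exact hc a ha
      · exact h _ (List.mem_cons_of_mem _ h1)
    · rw [if_neg hc] at hs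
      rcases List.mem_cons.1 hs with h1 | h1
      · subst h1
        set i := r.findIdx (fun y => x < y) with hidef
        have hil : i < r.length := bump_lt hc
        have hsr : List.Pairwise (· ≤ ·) r := h r (by simp)
        rw [List.pairwise_iff_getElem] at hsr ⊢
        intro a b ha hb hab
        simp only [List.length_set] at ha hb
        rw [List.getElem_set, List.getElem_set]
        have hxz : x < r[i] := by
          have := bump_gt hc
          rwa [List.getD_eq_getElem _ _ hil] at this
        split
        · next hia =>
          subst hia
          split
          · omega
          · -- x ≤ r[b], i < b
            have : r[i] ≤ r[b] := hsr _ _ hil hb hab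
            omega
        · next hia =>
          split
          · next hib =>
            have hai : a < i := hib ▸ hab
            exact bump_before hai ha
          · exact hsr _ _ ha hb hab
      · exact ih (fun t ht => h t (List.mem_cons_of_mem _ ht)) _ h1

lemma rowInsert_cons_pos {r : List ℕ} {rest : List (List ℕ)} {x : ℕ}
    (hc : ∀ y ∈ r, y ≤ x) : rowInsert (r :: rest) x = (r ++ [x]) :: rest := by
  rw [rowInsert, if_pos hc]

lemma rowInsert_cons_neg {r : List ℕ} {rest : List (List ℕ)} {x : ℕ}
    (hc : ¬ ∀ y ∈ r, y ≤ x) :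
    rowInsert (r :: rest) x =
      r.set (r.findIdx fun y => x < y) x
        :: rowInsert rest (r.getD (r.findIdx fun y => x < y) 0) := by
  rw [rowInsert, if_neg hc]

lemma irow_cons_pos {r : List ℕ} {rest : List (List ℕ)} {x : ℕ}
    (hc : ∀ y ∈ r, y ≤ x) : irow (r :: rest) x = 0 := by
  rw [irow, if_pos hc]

lemma irow_cons_neg {r : List ℕ} {rest : List (List ℕ)} {x : ℕ}
    (hc : ¬ ∀ y ∈ r, y ≤ x) :
    irow (r :: rest) x = irow rest (r.getD (r.findIdx fun y => x < y) 0) + 1 := by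
  rw [irow, if_neg hc]

/-- Row bumping comparison, descent case: inserting a strictly smaller letter afterwards
lands in a strictly lower row. -/
lemma irow_lt_of_gt (P : List (List ℕ)) {x y : ℕ} (hyx : y < x) :
    irow P x < irow (rowInsert P x) y := by
  induction P generalizing x y with
  | nil =>
    rw [rowInsert, irow, irow_cons_neg (by push_neg; exact ⟨x, by simp, hyx⟩), irow]
    simp
  | cons r rest ih =>
    by_cases hc : ∀ z ∈ r, z ≤ x
    · rw [rowInsert_cons_pos hc, irow_cons_pos hc,
        irow_cons_neg (by push_neg; exact ⟨x, by simp, hyx⟩)]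
      simp
    · rw [rowInsert_cons_neg hc, irow_cons_neg hc]
      set i := r.findIdx (fun z => x < z) with hidef
      have hil : i < r.length := bump_lt hc
      set z := r.getD i 0 with hzdef
      have hxz : x < z := bump_gt hc
      have hmem : x ∈ r.set i x := mem_set_self hil
      rw [irow_cons_neg (by push_neg; exact ⟨x, hmem, hyx⟩)]
      set j := (r.set i x).findIdx (fun v => y < v) with hjdef
      have hji : j ≤ i := by
        by_contra hj
        push_neg at hj
        have hlen : i < (r.set i x).length := by simpa using hil
        have := List.not_of_lt_findIdx (xs := r.set i x) (p := fun v => y < v)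
          (i := i) (hjdef ▸ hj)
        rw [List.getElem_set hlen, if_pos rfl] at this
        simp [hyx] at this
      have hjl : j < (r.set i x).length := lt_of_le_of_lt (by simpa using hji) (by simpa using hil)
      have hd : (r.set i x).getD j 0 < z := by
        rw [List.getD_eq_getElem _ _ hjl, List.getElem_set]
        split
        · exact hxz
        · next hne =>
          have hji' : j < i := lt_of_le_of_ne hji (fun h => hne h.symm)
          calc r[j] ≤ x := bump_before hji' (by simpa using hjl)
            _ < z := hxz
      have := ih (x := z) (y := (r.set i x).getD j 0) hd
      omega

/-- Row bumping comparison, ascent case: inserting a weakly larger letter afterwards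
lands in a weakly higher row. -/
lemma irow_le_of_le {P : List (List ℕ)} (hP : ∀ r ∈ P, List.Pairwise (· ≤ ·) r)
    {x y : ℕ} (hxy : x ≤ y) :
    irow (rowInsert P x) y ≤ irow P x := by
  induction P generalizing x y with
  | nil =>
    rw [rowInsert, irow, irow_cons_pos (by simpa using hxy)]
  | cons r rest ih =>
    by_cases hc : ∀ z ∈ r, z ≤ x
    · rw [rowInsert_cons_pos hc, irow_cons_pos hc, irow_cons_pos ?_]
      intro v hv
      rcases List.mem_append.1 hv with h1 | h1
      · exact (hc v h1).trans hxy
      · simp at h1; omega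
    · rw [rowInsert_cons_neg hc, irow_cons_neg hc]
      set i := r.findIdx (fun z => x < z) with hidef
      have hil : i < r.length := bump_lt hc
      set z := r.getD i 0 with hzdef
      have hxz : x < z := bump_gt hc
      by_cases hc2 : ∀ v ∈ r.set i x, v ≤ y
      · rw [irow_cons_pos hc2]; omega
      · rw [irow_cons_neg hc2]
        set j := (r.set i x).findIdx (fun v => y < v) with hjdef
        have hjl : j < (r.set i x).length := by
          apply List.findIdx_lt_length_of_exists
          push_neg at hc2
          obtain ⟨v, hv, hv2⟩ := hc2
          exact ⟨v, hv, by simpa using hv2⟩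
        have hij : i < j := by
          rcases lt_or_ge i j with h1 | h1
          · exact h1
          · exfalso
            have hpred := List.findIdx_getElem (p := fun v => y < v) (xs := r.set i x)
              (w := hjl)
            rw [List.getElem_set] at hpred
            simp only [decide_eq_true_eq] at hpred
            simp only [← hjdef] at hpred
            rcases eq_or_lt_of_le h1 with h2 | h2
            · rw [if_pos (by omega)] at hpred; omega
            · rw [if_neg (by omega)] at hpred
              have : r[j] ≤ x := bump_before (by omega) (by simpa using hjl)
              omega
        have hsr : List.Pairwise (· ≤ ·) r := hP r (by simp)
        have hzd : z ≤ (r.set i x).getD j 0 := by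
          rw [List.getD_eq_getElem _ _ hjl, List.getElem_set, if_neg (by omega)]
          rw [hzdef, List.getD_eq_getElem _ _ hil]
          rw [List.pairwise_iff_getElem] at hsr
          exact hsr _ _ hil (by simpa using hjl) hij
        have := ih (fun t ht => hP t (List.mem_cons_of_mem _ ht)) hzd
        omega


lemma find?_range {n a : ℕ} {p : ℕ → Bool} (ha : a < n) (hpa : p a = true)
    (hlt : ∀ i < a, p i = false) : (List.range n).find? p = some a := by
  rw [List.find?_eq_some_iff_getElem]
  refine ⟨hpa, a, by simpa using ha, by simp, ?_⟩
  intro j hj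
  simp [List.getElem_range, hlt j hj]

lemma step_r (P : List (List ℕ)) (x : ℕ) :
    (((List.range (rowInsert P x).length).find? fun i =>
      (P.map List.length).getD i 0 ≠ ((rowInsert P x).map List.length).getD i 0).getD 0)
      = irow P x := by
  rw [find?_range (a := irow P x) ?_ ?_ ?_]
  · rfl
  · rw [rowInsert_length]; omega
  · have := lenD_irow P x
    simp only [ne_eq, decide_eq_true_eq]
    omega
  · intro i hi
    have := lenD_eq P x (i := i) (by omega)
    simp only [ne_eq, decide_eq_false_iff_not, not_not]
    omega

lemma RS_append (w : List ℕ) (x : ℕ) :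
    RS (w ++ [x]) =
      (rowInsert (RS w).1 x,
        addAt (RS w).2 (irow (RS w).1 x) (w.length + 1)) := by
  have h1 : ((w ++ [x]).zipIdx.map Prod.swap) = (w.zipIdx.map Prod.swap) ++ [(w.length, x)] := by
    simp [List.zipIdx_append]
  show ((w ++ [x]).zipIdx.map Prod.swap).foldl _ ([], []) = _
  rw [h1, List.foldl_append, List.foldl_cons, List.foldl_nil]
  show (rowInsert (RS w).1 x, addAt (RS w).2 _ (w.length + 1)) = _
  rw [step_r]
  rfl

lemma addAt_length (Q : List (List ℕ)) (r x : ℕ) :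
    (addAt Q r x).length = if r < Q.length then Q.length else Q.length + 1 := by
  unfold addAt
  split <;> simp_all

lemma mem_of_mem_addAt {Q : List (List ℕ)} {r x : ℕ} {row : List ℕ} {k : ℕ}
    (hrow : row ∈ addAt Q r x) (hk : k ∈ row) : (∃ row' ∈ Q, k ∈ row') ∨ k = x := by
  unfold addAt at hrow
  split at hrow
  · next h =>
    rcases List.mem_or_eq_of_mem_set hrow with h1 | h1
    · exact Or.inl ⟨row, h1, hk⟩
    · subst h1
      rcases List.mem_append.1 hk with h2 | h2
      · exact Or.inl ⟨_, List.getElem_mem h, h2⟩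
      · simp at h2; exact Or.inr h2
  · rcases List.mem_append.1 hrow with h1 | h1
    · exact Or.inl ⟨row, h1, hk⟩
    · simp at h1; subst h1; simp at hk; exact Or.inr hk

lemma rowOf_addAt_new {Q : List (List ℕ)} {r k : ℕ} (hr : r ≤ Q.length)
    (hk : ∀ row ∈ Q, k ∉ row) : rowOf (addAt Q r k) k = r := by
  rw [rowOf]
  unfold addAt
  split
  · next h =>
    rw [List.findIdx_eq (by simpa using h)]
    constructor
    · rw [List.getElem_set, if_pos rfl]
      simp
    · intro j hj
      have hjl : j < Q.length := by omega
      rw [List.getElem_set, if_neg (by omega)]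
      simpa using hk _ (List.getElem_mem hjl)
  · next h =>
    have hrq : r = Q.length := by omega
    subst hrq
    rw [List.findIdx_eq (by simp)]
    constructor
    · rw [List.getElem_concat_length rfl]
      simp
    · intro j hj
      rw [List.getElem_append_left hj]
      simpa using hk _ (List.getElem_mem hj)

lemma rowOf_spec {Q : List (List ℕ)} {k : ℕ}
    (hex : ∃ m, ∃ h : m < Q.length, k ∈ Q[m]) :
    ∃ h : rowOf Q k < Q.length, k ∈ Q[rowOf Q k]
      ∧ ∀ j (hj : j < rowOf Q k), k ∉ Q[j]'(by omega) := by
  obtain ⟨m, hm, hmem⟩ := hex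
  have h1 : rowOf Q k < Q.length := by
    apply List.findIdx_lt_length_of_exists
    exact ⟨Q[m], List.getElem_mem hm, by simpa using hmem⟩
  refine ⟨h1, ?_, ?_⟩
  · have := List.findIdx_getElem (p := fun row => decide (k ∈ row)) (xs := Q) (w := h1)
    exact of_decide_eq_true this
  · intro j hj
    have := List.not_of_lt_findIdx (xs := Q) (p := fun row => decide (k ∈ row)) hj
    simpa using this

lemma rowOf_addAt_old {Q : List (List ℕ)} {r x k : ℕ} (hkx : k ≠ x)
    (hex : ∃ m, ∃ h : m < Q.length, k ∈ Q[m]) :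
    rowOf (addAt Q r x) k = rowOf Q k := by
  obtain ⟨hm, hmem, hlt⟩ := rowOf_spec hex
  set m := rowOf Q k with hmdef
  rw [rowOf]
  unfold addAt
  split
  · next h =>
    rw [List.findIdx_eq (by simpa using hm)]
    constructor
    · rw [List.getElem_set]
      split
      · next hrm =>
        subst hrm
        simp only [List.get_eq_getElem]
        simp [List.mem_append, hmem]
        exact Or.inl hmem
      · simpa using hmem
    · intro j hj
      have hjl : j < Q.length := by omega
      rw [List.getElem_set]
      split
      · next hrj =>
        subst hrj
        simp only [List.get_eq_getElem, List.mem_append, decide_eq_false_iff_not]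
        push_neg
        exact ⟨hlt _ hj, by simpa using hkx⟩
      · simpa using hlt _ hj
  · rw [List.findIdx_eq (by simp; omega)]
    constructor
    · rw [List.getElem_append_left hm]
      simpa using hmem
    · intro j hj
      rw [List.getElem_append_left (by omega)]
      simpa using hlt _ hj

lemma mem_addAt_self {Q : List (List ℕ)} {r x : ℕ} (hr : r ≤ Q.length) :
    ∃ h : r < (addAt Q r x).length, x ∈ (addAt Q r x)[r] := by
  unfold addAt
  split
  · next h =>
    refine ⟨by simpa using h, ?_⟩
    rw [List.getElem_set, if_pos rfl]
    simp
  · next h =>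
    have hrq : r = Q.length := by omega
    subst hrq
    refine ⟨by simp, ?_⟩
    rw [List.getElem_concat_length rfl]
    simp

lemma mem_addAt_of_mem {Q : List (List ℕ)} {r x m k : ℕ} (hm : m < Q.length)
    (hk : k ∈ Q[m]) :
    ∃ h : m < (addAt Q r x).length, k ∈ (addAt Q r x)[m] := by
  unfold addAt
  split
  · next h =>
    refine ⟨by simpa using hm, ?_⟩
    rw [List.getElem_set]
    split
    · next hrm => subst hrm; simp [List.mem_append, hk]
    · exact hk
  · refine ⟨by simp; omega, ?_⟩
    rw [List.getElem_append_left hm]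
    exact hk

theorem RS_inv (w : List ℕ) :
    (∀ r ∈ (RS w).1, List.Pairwise (· ≤ ·) r) ∧
    (RS w).2.length = (RS w).1.length ∧
    (∀ row ∈ (RS w).2, ∀ k ∈ row, 1 ≤ k ∧ k ≤ w.length) ∧
    (∀ j, 1 ≤ j → j ≤ w.length → ∃ m, ∃ h : m < (RS w).2.length, j ∈ (RS w).2[m]) ∧
    (∀ y : ℕ, ∀ h : w ≠ [],
      (y < w.getLast h → rowOf (RS w).2 w.length < irow (RS w).1 y) ∧
      (w.getLast h ≤ y → irow (RS w).1 y ≤ rowOf (RS w).2 w.length)) ∧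
    (∀ j, 1 ≤ j → j + 1 ≤ w.length →
      (rowOf (RS w).2 j < rowOf (RS w).2 (j + 1) ↔ w.getD j 0 < w.getD (j - 1) 0)) := by
  induction w using List.reverseRecOn with
  | nil =>
    have hRS : RS [] = ([], []) := by simp [RS]
    refine ⟨?_, ?_, ?_, ?_, ?_, ?_⟩ <;> simp [hRS] <;> omega
  | append_singleton w x ih =>
    obtain ⟨ih1, ih2, ih3, ih4, ih5, ih6⟩ := ih
    have hRS := RS_append w x
    set P := (RS w).1 with hP
    set Q := (RS w).2 with hQ
    set m := w.length with hm
    set r := irow P x with hr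
    have h1 : (RS (w ++ [x])).1 = rowInsert P x := by rw [hRS]
    have h2 : (RS (w ++ [x])).2 = addAt Q r (m + 1) := by rw [hRS]
    have hlen : (w ++ [x]).length = m + 1 := by simp [hm]
    have hr_le : r ≤ Q.length := ih2 ▸ irow_le P x
    have hnotin : ∀ row ∈ Q, (m + 1) ∉ row := by
      intro row hrow hmem
      have := ih3 row hrow _ hmem
      omega
    have hnew : rowOf (RS (w ++ [x])).2 (m + 1) = r := by
      rw [h2]; exact rowOf_addAt_new hr_le hnotin
    have hold : ∀ k, 1 ≤ k → k ≤ m → rowOf (RS (w ++ [x])).2 k = rowOf Q k := by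
      intro k h1k hk
      rw [h2]
      exact rowOf_addAt_old (by omega) (ih4 k h1k hk)
    refine ⟨?_, ?_, ?_, ?_, ?_, ?_⟩
    · rw [h1]; exact rowInsert_sorted ih1
    · rw [h1, h2, addAt_length, rowInsert_length, ← hr, ← ih2]
      split <;> omega
    · intro row hrow k hk
      rw [h2] at hrow
      rw [hlen]
      rcases mem_of_mem_addAt hrow hk with ⟨row', hrow', hk'⟩ | hkx
      · have := ih3 row' hrow' k hk'
        omega
      · omega
    · intro j hj1 hj2
      rw [hlen] at hj2
      rw [h2]
      rcases eq_or_lt_of_le hj2 with hje | hjlt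
      · rw [hje]
        exact ⟨r, mem_addAt_self (Q := Q) (x := m + 1) hr_le⟩
      · obtain ⟨m0, hm0, hmem⟩ := ih4 j hj1 (by omega)
        obtain ⟨h', hmem'⟩ := mem_addAt_of_mem (r := r) (x := m + 1) hm0 hmem
        exact ⟨m0, h', hmem'⟩
    · intro y hne
      have hlast : (w ++ [x]).getLast hne = x := List.getLast_concat
      rw [hlast, hlen, hnew, h1]
      constructor
      · intro hyx
        exact lt_of_le_of_lt (le_refl r) (irow_lt_of_gt P hyx)
      · intro hxy
        exact irow_le_of_le ih1 hxy
    · intro j hj1 hj2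
      rw [hlen] at hj2
      rcases eq_or_lt_of_le hj2 with hje | hjlt
      · -- j = m
        have hjm : j = m := by omega
        have hmpos : 1 ≤ m := by omega
        have hwne : w ≠ [] := by
          intro hw
          rw [hm, hw] at hmpos
          simp at hmpos
        have e1 : rowOf (RS (w ++ [x])).2 j = rowOf Q m := by
          rw [hjm]; exact hold m hmpos le_rfl
        have e2 : rowOf (RS (w ++ [x])).2 (j + 1) = r := by rw [hjm]; exact hnew
        have e3 : (w ++ [x]).getD j 0 = x := by
          rw [hjm, hm]
          simp
        have e4 : (w ++ [x]).getD (j - 1) 0 = w.getLast hwne := by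
          rw [List.getD_append _ _ _ _ (by omega), List.getLast_eq_getElem,
            List.getD_eq_getElem _ _ (by omega)]
          congr 1
          omega
        rw [e1, e2, e3, e4]
        have h5 := ih5 x hwne
        rcases lt_or_ge x (w.getLast hwne) with hc | hc
        · have := h5.1 hc
          constructor <;> intro <;> [exact hc; omega]
        · have := h5.2 hc
          constructor <;> intro <;> omega
      · -- j + 1 ≤ m
        have e1 : rowOf (RS (w ++ [x])).2 j = rowOf Q j := hold j hj1 (by omega)
        have e2 : rowOf (RS (w ++ [x])).2 (j + 1) = rowOf Q (j + 1) := hold (j + 1) (by omega) (by omega)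
        have e3 : (w ++ [x]).getD j 0 = w.getD j 0 := List.getD_append _ _ _ _ (by omega)
        have e4 : (w ++ [x]).getD (j - 1) 0 = w.getD (j - 1) 0 := List.getD_append _ _ _ _ (by omega)
        rw [e1, e2, e3, e4]
        exact ih6 j hj1 (by omega)


/-- If `(P, Q)` is the pair of tableaux produced from a word `w` by the Robinson–Schensted
algorithm, then `maj w = maj Q`. -/
theorem stmt18 (w : List ℕ) : majL w = majQ (RS w).2 w.length := by
  obtain ⟨-, -, -, -, -, h6⟩ := RS_inv w
  rw [majL, majQ]
  rcases Nat.eq_zero_or_pos w.length with h0 | hpos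
  · rw [h0]
    simp
  · have hn : w.length = (w.length - 1) + 1 := by omega
    rw [← Finset.Ico_add_one_right_eq_Icc, ← hn, Finset.sum_Ico_eq_sum_range]
    conv_lhs => rw [hn, Finset.sum_range_succ]
    rw [show (if w.getD (w.length - 1 + 1) 0 < w.getD (w.length - 1) 0 ∧
        w.length - 1 + 1 < w.length - 1 + 1 then w.length - 1 + 1 else 0) = 0
      from if_neg (by omega), add_zero]
    apply Finset.sum_congr (by norm_num)
    intro i hi
    simp only [Finset.mem_range] at hi
    have hiff := h6 (i + 1) (by omega) (by omega)
    simp only [Nat.add_sub_cancel] at hiff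
    have h1i : 1 + i = i + 1 := by omega
    rw [h1i]
    by_cases hc : w.getD (i + 1) 0 < w.getD i 0
    · rw [if_pos ⟨hc, by omega⟩, if_pos (hiff.2 hc)]
    · rw [if_neg (by tauto), if_neg (fun hcc => hc (hiff.1 hcc))]
end
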